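/- (Squeezing property of the high-mode bilinear vector operator B_2^Q) Let s ≥ 0 and let N be a positive integer. Then for every t ∈ ℝ the operator 𝐁_2^Q maps (Ḣ^s)² into (Ḣ^s)² and there is a constant C(s), independent of N, such that ‖𝐁_2^Q(u,v)‖_{(Ḣ^s)²} ≤ C(s) (1/N) ‖(u,v)‖_{(Ḣ^s)²}², and ‖𝐁_2^Q(u,v) − 𝐁_2^Q(ũ,ṽ)‖_{(Ḣ^s)²} ≤ C(s) (1/N) ‖(u,v) − (ũ,ṽ)‖_{(Ḣ^s)²} (‖(u,v)‖_{(Ḣ^s)²} + ‖(ũ,ṽ)‖_{(Ḣ^s)²}). -/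

import Mathlib

open MeasureTheory Set

noncomputable section

/-- The weight `|k|^(2s)` appearing in the `Ḣ^s` norm. -/
def wt (s : ℝ) (k : ℤ) : ℝ := ((|k| : ℤ) : ℝ) ^ (2 * s)

/-- Membership in the homogeneous Sobolev space `Ḣ^s` of sequences indexed by
nonzero integers. -/
def memH (s : ℝ) (u : ℤ → ℂ) : Prop :=
  Summable (fun k : {k : ℤ // k ≠ 0} => wt s k.1 * ‖u k.1‖ ^ 2)

/-- The `Ḣ^s` norm. -/
def hnorm (s : ℝ) (u : ℤ → ℂ) : ℝ :=
  Real.sqrt (∑' k : {k : ℤ // k ≠ 0}, wt s k.1 * ‖u k.1‖ ^ 2)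

/-- The `(Ḣ^s)²` norm of a pair. -/
def hnorm2 (s : ℝ) (u v : ℤ → ℂ) : ℝ :=
  Real.sqrt (hnorm s u ^ 2 + hnorm s v ^ 2)

/-- The conserved energy functional `𝓔(u,v) = 2‖u‖² + 2‖v‖² + ‖u-v‖²` (in `Ḣ^0`). -/
def energyE (u v : ℤ → ℂ) : ℝ :=
  2 * hnorm 0 u ^ 2 + 2 * hnorm 0 v ^ 2 + hnorm 0 (fun k => u k - v k) ^ 2

/-- Projection `𝒫` onto the low Fourier modes `|k| ≤ N`. -/
def Plow (N : ℕ) (u : ℤ → ℂ) : ℤ → ℂ := fun k => if |k| ≤ (N : ℤ) then u k else 0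

/-- Projection `𝒬 = I - 𝒫` onto the high Fourier modes `|k| > N`. -/
def Qhigh (N : ℕ) (u : ℤ → ℂ) : ℤ → ℂ := fun k => if |k| ≤ (N : ℤ) then 0 else u k

/-- The oscillating factor `e^{3 i k k₁ k₂ t}` with `k₂ = k - k₁`. -/
def osc2 (t : ℝ) (k k1 : ℤ) : ℂ :=
  Complex.exp (3 * Complex.I * (k : ℂ) * (k1 : ℂ) * ((k - k1 : ℤ) : ℂ) * (t : ℂ))

/-- The oscillating factor `e^{3 i (k₁+k₂)(k₂+k₃)(k₁+k₃) t}`. -/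
def osc3 (t : ℝ) (k1 k2 k3 : ℤ) : ℂ :=
  Complex.exp (3 * Complex.I * ((k1 + k2 : ℤ) : ℂ) * ((k2 + k3 : ℤ) : ℂ) *
    ((k1 + k3 : ℤ) : ℂ) * (t : ℂ))

/-- The bilinear operator `B₁` at time `t`. -/
def B1 (t : ℝ) (φ ψ : ℤ → ℂ) : ℤ → ℂ := fun k =>
  Complex.I * (k : ℂ) / 2 *
    ∑' k1 : ℤ, if k1 ≠ 0 ∧ k - k1 ≠ 0 then osc2 t k k1 * φ k1 * ψ (k - k1) else 0

/-- The bilinear operator `B₂` at time `t`. -/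
def B2 (t : ℝ) (φ ψ : ℤ → ℂ) : ℤ → ℂ := fun k =>
  (1 / 6 : ℂ) *
    ∑' k1 : ℤ, if k1 ≠ 0 ∧ k - k1 ≠ 0 then
      osc2 t k k1 * φ k1 * ψ (k - k1) / ((k1 : ℂ) * ((k - k1 : ℤ) : ℂ)) else 0

/-- The trilinear operator `R₃` at time `t`. -/
def R3 (t : ℝ) (φ ψ ξ : ℤ → ℂ) : ℤ → ℂ := fun k =>
  ∑' p : ℤ × ℤ,
    if p.1 ≠ 0 ∧ p.2 ≠ 0 ∧ k - p.1 - p.2 ≠ 0 then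
      osc3 t p.1 p.2 (k - p.1 - p.2) * φ p.1 * ψ p.2 * ξ (k - p.1 - p.2) / (p.1 : ℂ)
    else 0

/-- The resonant part `R₃res` (sum over `(k₁+k₂)(k₂+k₃)(k₁+k₃) = 0`). -/
def R3res (φ ψ ξ : ℤ → ℂ) : ℤ → ℂ := fun k =>
  ∑' p : ℤ × ℤ,
    if p.1 ≠ 0 ∧ p.2 ≠ 0 ∧ k - p.1 - p.2 ≠ 0 ∧
        (p.1 + p.2) * (p.2 + (k - p.1 - p.2)) * (p.1 + (k - p.1 - p.2)) = 0 then
      φ p.1 * ψ p.2 * ξ (k - p.1 - p.2) / (p.1 : ℂ)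
    else 0

/-- The nonresonant part `R₃nres` (sum over `(k₁+k₂)(k₂+k₃)(k₁+k₃) ≠ 0`). -/
def R3nres (t : ℝ) (φ ψ ξ : ℤ → ℂ) : ℤ → ℂ := fun k =>
  ∑' p : ℤ × ℤ,
    if p.1 ≠ 0 ∧ p.2 ≠ 0 ∧ k - p.1 - p.2 ≠ 0 ∧
        (p.1 + p.2) * (p.2 + (k - p.1 - p.2)) * (p.1 + (k - p.1 - p.2)) ≠ 0 then
      osc3 t p.1 p.2 (k - p.1 - p.2) * φ p.1 * ψ p.2 * ξ (k - p.1 - p.2) / (p.1 : ℂ)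
    else 0

/-- The operator `R₃nres1(φ,ψ,ξ) = R₃nres(φ,𝒫ψ,ξ) + R₃nres(φ,𝒬ψ,𝒫ξ)`. -/
def R3nres1 (N : ℕ) (t : ℝ) (φ ψ ξ : ℤ → ℂ) : ℤ → ℂ := fun k =>
  R3nres t φ (Plow N ψ) ξ k + R3nres t φ (Qhigh N ψ) (Plow N ξ) k

/-- The trilinear operator `B₃` (nonresonant indices). -/
def B3 (t : ℝ) (φ ψ ξ : ℤ → ℂ) : ℤ → ℂ := fun k =>
  ∑' p : ℤ × ℤ,
    if p.1 ≠ 0 ∧ p.2 ≠ 0 ∧ k - p.1 - p.2 ≠ 0 ∧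
        (p.1 + p.2) * (p.2 + (k - p.1 - p.2)) * (p.1 + (k - p.1 - p.2)) ≠ 0 then
      osc3 t p.1 p.2 (k - p.1 - p.2) * φ p.1 * ψ p.2 * ξ (k - p.1 - p.2) /
        ((p.1 : ℂ) * ((p.1 + p.2 : ℤ) : ℂ) * ((p.2 + (k - p.1 - p.2) : ℤ) : ℂ) *
          ((p.1 + (k - p.1 - p.2) : ℤ) : ℂ))
    else 0

/-- The operator `B₃₀(φ,ψ,ξ) = B₃(φ,𝒬ψ,𝒬ξ)`. -/
def B30 (N : ℕ) (t : ℝ) (φ ψ ξ : ℤ → ℂ) : ℤ → ℂ :=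
  B3 t φ (Qhigh N ψ) (Qhigh N ξ)

/-- The phase `Φ(k₁,k₂,k₃,k₄) = (k₁+k₂+k₃+k₄)³ - k₁³ - k₂³ - k₃³ - k₄³`. -/
def Phi4 (k1 k2 k3 k4 : ℤ) : ℤ :=
  (k1 + k2 + k3 + k4) ^ 3 - k1 ^ 3 - k2 ^ 3 - k3 ^ 3 - k4 ^ 3

/-- The oscillating factor `e^{i Φ(k₁,k₂,k₃,k₄) t}`. -/
def osc4 (t : ℝ) (k1 k2 k3 k4 : ℤ) : ℂ :=
  Complex.exp (Complex.I * ((Phi4 k1 k2 k3 k4 : ℤ) : ℂ) * (t : ℂ))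

/-- The quadrilinear operator `B₄¹`. -/
def B41 (t : ℝ) (φ ψ ξ η : ℤ → ℂ) : ℤ → ℂ := fun k =>
  ∑' q : ℤ × ℤ × ℤ,
    let k1 := q.1; let k2 := q.2.1; let k3 := q.2.2; let k4 := k - k1 - k2 - k3
    if k1 ≠ 0 ∧ k2 ≠ 0 ∧ k3 ≠ 0 ∧ k4 ≠ 0 ∧
        (k1 + k2) * (k1 + k3 + k4) * (k2 + k3 + k4) ≠ 0 then
      osc4 t k1 k2 k3 k4 * φ k1 * ψ k2 * ξ k3 * η k4 /
        (((k1 + k2 : ℤ) : ℂ) * ((k1 + k3 + k4 : ℤ) : ℂ) * ((k2 + k3 + k4 : ℤ) : ℂ))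
    else 0

/-- The quadrilinear operator `B₄²`. -/
def B42 (t : ℝ) (φ ψ ξ η : ℤ → ℂ) : ℤ → ℂ := fun k =>
  ∑' q : ℤ × ℤ × ℤ,
    let k1 := q.1; let k2 := q.2.1; let k3 := q.2.2; let k4 := k - k1 - k2 - k3
    if k1 ≠ 0 ∧ k2 ≠ 0 ∧ k3 ≠ 0 ∧ k4 ≠ 0 ∧
        (k1 + k2) * (k1 + k3 + k4) * (k2 + k3 + k4) ≠ 0 then
      osc4 t k1 k2 k3 k4 * ((k3 + k4 : ℤ) : ℂ) * φ k1 * ψ k2 * ξ k3 * η k4 /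
        ((k1 : ℂ) * ((k1 + k2 : ℤ) : ℂ) * ((k1 + k3 + k4 : ℤ) : ℂ) *
          ((k2 + k3 + k4 : ℤ) : ℂ))
    else 0

/-- The quadrilinear operator `B₄ = B₄¹ + B₄²`. -/
def B4 (t : ℝ) (φ ψ ξ η : ℤ → ℂ) : ℤ → ℂ := fun k =>
  B41 t φ ψ ξ η k + B42 t φ ψ ξ η k

/-- Right-hand side (before the `ik/2` factor and integration) of the `u`-equation
of the transformed Majda–Biello system. -/
def mbRHSu (u v : ℝ → ℤ → ℂ) (τ : ℝ) (k : ℤ) : ℂ :=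
  ∑' k1 : ℤ, if k1 ≠ 0 ∧ k - k1 ≠ 0 then
    osc2 τ k k1 * (u τ k1 * v τ (k - k1) - u τ k1 * u τ (k - k1)) else 0

/-- Right-hand side (before the `ik/2` factor and integration) of the `v`-equation
of the transformed Majda–Biello system. -/
def mbRHSv (u v : ℝ → ℤ → ℂ) (τ : ℝ) (k : ℤ) : ℂ :=
  ∑' k1 : ℤ, if k1 ≠ 0 ∧ k - k1 ≠ 0 then
    osc2 τ k k1 * (u τ k1 * v τ (k - k1) - v τ k1 * v τ (k - k1)) else 0

/-- `(u,v)` is a solution of the transformed Majda–Biello system on `[0,T]`: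
it belongs to `L^∞([0,T];(Ḣ^0)²)` and satisfies the integrated equations. -/
def IsMBSolution (T : ℝ) (u v : ℝ → ℤ → ℂ) : Prop :=
  (∃ M : ℝ, ∀ t ∈ Icc (0 : ℝ) T,
      memH 0 (u t) ∧ memH 0 (v t) ∧ hnorm2 0 (u t) (v t) ≤ M) ∧
  ∀ k : ℤ, k ≠ 0 → ∀ t ∈ Icc (0 : ℝ) T,
    (u t k - u 0 k = Complex.I * (k : ℂ) / 2 * (∫ τ in (0 : ℝ)..t, mbRHSu u v τ k)) ∧
    (v t k - v 0 k = Complex.I * (k : ℂ) / 2 * (∫ τ in (0 : ℝ)..t, mbRHSv u v τ k))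

/-- The (finite) right-hand side of the `u`-equation of the `N`-th Galerkin system. -/
def galRHSu (N : ℕ) (t : ℝ) (f g : ℤ → ℂ) (k : ℤ) : ℂ :=
  Complex.I * (k : ℂ) / 2 * ∑ k1 ∈ Finset.Icc (-(N : ℤ)) (N : ℤ),
    (if k1 ≠ 0 ∧ k - k1 ≠ 0 ∧ |k - k1| ≤ (N : ℤ) then
      osc2 t k k1 * (f k1 * g (k - k1) - f k1 * f (k - k1)) else 0)

/-- The (finite) right-hand side of the `v`-equation of the `N`-th Galerkin system. -/
def galRHSv (N : ℕ) (t : ℝ) (f g : ℤ → ℂ) (k : ℤ) : ℂ :=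
  Complex.I * (k : ℂ) / 2 * ∑ k1 ∈ Finset.Icc (-(N : ℤ)) (N : ℤ),
    (if k1 ≠ 0 ∧ k - k1 ≠ 0 ∧ |k - k1| ≤ (N : ℤ) then
      osc2 t k k1 * (f k1 * g (k - k1) - g k1 * g (k - k1)) else 0)

/-- `(u,v)` solves the `N`-th Galerkin system on the set `S` with initial data
`(uin, vin)`. -/
def IsGalerkinSolution (N : ℕ) (uin vin : ℤ → ℂ) (S : Set ℝ) (u v : ℝ → ℤ → ℂ) : Prop :=
  (∀ k : ℤ, k ≠ 0 → u 0 k = uin k ∧ v 0 k = vin k) ∧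
  ∀ t ∈ S, ∀ k : ℤ, k ≠ 0 →
    HasDerivWithinAt (fun τ : ℝ => u τ k)
      (if |k| ≤ (N : ℤ) then galRHSu N t (u t) (v t) k else 0) S t ∧
    HasDerivWithinAt (fun τ : ℝ => v τ k)
      (if |k| ≤ (N : ℤ) then galRHSv N t (u t) (v t) k else 0) S t

/-- First component of the high-mode bilinear vector operator `𝐁₂^𝒬`. -/
def vecB2Qfst (N : ℕ) (t : ℝ) (u v : ℤ → ℂ) : ℤ → ℂ := fun k =>
  B2 t (Plow N u) (Qhigh N v) k + B2 t (Qhigh N u) v k -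
    B2 t (Plow N u) (Qhigh N u) k - B2 t (Qhigh N u) u k

/-- Second component of the high-mode bilinear vector operator `𝐁₂^𝒬`. -/
def vecB2Qsnd (N : ℕ) (t : ℝ) (u v : ℤ → ℂ) : ℤ → ℂ := fun k =>
  B2 t (Plow N u) (Qhigh N v) k + B2 t (Qhigh N u) v k -
    B2 t (Plow N v) (Qhigh N v) k - B2 t (Qhigh N v) v k

open scoped ENNReal NNReal

namespace B2Qaux

lemma ofReal_norm_eq_coe_nnnorm {E : Type*} [SeminormedAddCommGroup E] (a : E) :
    ENNReal.ofReal ‖a‖ = ((‖a‖₊ : ℝ≥0) : ℝ≥0∞) :=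
  ofReal_norm a

lemma mul_le_sq_add_sq (x y : ℝ≥0∞) : x * y ≤ x ^ 2 + y ^ 2 := by
  rcases le_total x y with h | h
  · calc x * y ≤ y * y := by exact mul_le_mul_left h y
    _ = y ^ 2 := (sq y).symm
    _ ≤ x ^ 2 + y ^ 2 := le_add_self
  · calc x * y ≤ x * x := by exact mul_le_mul_right h x
    _ = x ^ 2 := (sq x).symm
    _ ≤ x ^ 2 + y ^ 2 := le_self_add

lemma tsum_mul_tsum (a b : ℤ → ℝ≥0∞) :
    (∑' i, a i) * (∑' j, b j) = ∑' i, ∑' j, a i * b j := by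
  rw [← ENNReal.tsum_mul_right]
  exact tsum_congr fun i => (ENNReal.tsum_mul_left).symm

/-- Cauchy–Schwarz with a factor 2. -/
lemma cs2 (f g : ℤ → ℝ≥0∞) :
    (∑' i, f i * g i) ^ 2 ≤ 2 * ((∑' i, f i ^ 2) * ∑' i, g i ^ 2) := by
  have h1 : (∑' i, f i * g i) ^ 2 = ∑' i, ∑' j, (f i * g i) * (f j * g j) := by
    rw [sq]; exact tsum_mul_tsum _ _
  rw [h1]
  clear h1
  have h2 : ∀ i j : ℤ, (f i * g i) * (f j * g j) ≤ (f i * g j) ^ 2 + (f j * g i) ^ 2 := by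
    intro i j
    calc (f i * g i) * (f j * g j) = (f i * g j) * (f j * g i) := by ring
    _ ≤ _ := mul_le_sq_add_sq _ _
  calc ∑' i, ∑' j, (f i * g i) * (f j * g j)
      ≤ ∑' i, ∑' j, ((f i * g j) ^ 2 + (f j * g i) ^ 2) :=
        ENNReal.tsum_le_tsum fun i => ENNReal.tsum_le_tsum fun j => h2 i j
    _ = ∑' i, ((∑' j, (f i * g j) ^ 2) + ∑' j, (f j * g i) ^ 2) := by
        exact tsum_congr fun i => ENNReal.tsum_add
    _ = (∑' i, ∑' j, (f i * g j) ^ 2) + ∑' i, ∑' j, (f j * g i) ^ 2 := ENNReal.tsum_add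
    _ = 2 * ((∑' i, f i ^ 2) * ∑' i, g i ^ 2) := by
        have e1 : (∑' i, ∑' j, (f i * g j) ^ 2) = (∑' i, f i ^ 2) * ∑' i, g i ^ 2 := by
          rw [tsum_mul_tsum]
          exact tsum_congr fun i => tsum_congr fun j => by rw [mul_pow]
        have e2 : (∑' i : ℤ, ∑' j : ℤ, (f j * g i) ^ 2) = (∑' i, f i ^ 2) * ∑' i, g i ^ 2 := by
          rw [ENNReal.tsum_comm (f := fun i j => (f j * g i) ^ 2), tsum_mul_tsum]
          exact tsum_congr fun i => tsum_congr fun j => by rw [mul_pow, mul_comm]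
        rw [e1, e2]; ring

/-- translation invariance -/
lemma tsum_shift (g : ℤ → ℝ≥0∞) (j : ℤ) : ∑' k, g (k - j) = ∑' k, g k :=
  (Equiv.subRight j).tsum_eq g

lemma econv_comm (f g : ℤ → ℝ≥0∞) (k : ℤ) :
    ∑' j, f j * g (k - j) = ∑' j, g j * f (k - j) := by
  have := (Equiv.subLeft k).tsum_eq (fun j => f j * g (k - j))
  rw [← this]
  refine tsum_congr fun x => ?_
  simp only [Equiv.subLeft_apply]
  rw [show k - (k - x) = x by ring, mul_comm]

/-- Young's inequality ℓ¹ ⋆ ℓ² → ℓ², with a factor 2. -/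
lemma young (f g : ℤ → ℝ≥0∞) :
    ∑' k, (∑' j, f j * g (k - j)) ^ 2 ≤ 2 * ((∑' j, f j) ^ 2 * ∑' j, g j ^ 2) := by
  have step1 : ∀ k : ℤ, (∑' j, f j * g (k - j)) ^ 2
      ≤ ∑' j, ∑' i, f j * f i * (g (k - j) ^ 2 + g (k - i) ^ 2) := by
    intro k
    rw [sq, tsum_mul_tsum]
    refine ENNReal.tsum_le_tsum fun j => ENNReal.tsum_le_tsum fun i => ?_
    calc f j * g (k - j) * (f i * g (k - i)) = f j * f i * (g (k - j) * g (k - i)) := by ring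
    _ ≤ f j * f i * (g (k - j) ^ 2 + g (k - i) ^ 2) :=
        mul_le_mul_right (mul_le_sq_add_sq _ _) _
  calc ∑' k, (∑' j, f j * g (k - j)) ^ 2
      ≤ ∑' k, ∑' j, ∑' i, f j * f i * (g (k - j) ^ 2 + g (k - i) ^ 2) :=
        ENNReal.tsum_le_tsum step1
    _ = ∑' j, ∑' i, ∑' k, f j * f i * (g (k - j) ^ 2 + g (k - i) ^ 2) := by
        rw [ENNReal.tsum_comm (f := fun k j => ∑' i, f j * f i * (g (k - j) ^ 2 + g (k - i) ^ 2))]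
        exact tsum_congr fun j =>
          ENNReal.tsum_comm (f := fun k i => f j * f i * (g (k - j) ^ 2 + g (k - i) ^ 2))
    _ = ∑' j, ∑' i, f j * f i * (2 * ∑' m, g m ^ 2) := by
        refine tsum_congr fun j => tsum_congr fun i => ?_
        rw [ENNReal.tsum_mul_left]
        congr 1
        rw [ENNReal.tsum_add, tsum_shift (fun m => g m ^ 2) j, tsum_shift (fun m => g m ^ 2) i,
          two_mul]
    _ = 2 * ((∑' j, f j) ^ 2 * ∑' j, g j ^ 2) := by
        have h3 : ∀ j : ℤ, (∑' i : ℤ, f j * f i * (2 * ∑' m, g m ^ 2))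
            = (f j * (2 * ∑' m, g m ^ 2)) * (∑' i, f i) := by
          intro j
          rw [show (fun i : ℤ => f j * f i * (2 * ∑' m, g m ^ 2))
              = fun i : ℤ => (f j * (2 * ∑' m, g m ^ 2)) * f i from funext fun i => by ring]
          rw [ENNReal.tsum_mul_left]
        rw [tsum_congr h3]
        rw [show (fun j : ℤ => (f j * (2 * ∑' m, g m ^ 2)) * (∑' i, f i))
            = fun j : ℤ => ((2 * ∑' m, g m ^ 2) * (∑' i, f i)) * f j from funext fun j => by ring]
        rw [ENNReal.tsum_mul_left]
        ring


noncomputable def EW (s : ℝ) (k : ℤ) : ℝ≥0∞ := ((k.natAbs : ℝ≥0∞)) ^ (2 * s)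
noncomputable def QS (s : ℝ) (m : ℤ → ℝ≥0∞) : ℝ≥0∞ :=
  ∑' k, if k = 0 then 0 else EW s k * m k ^ 2
noncomputable def ES (s : ℝ) (u : ℤ → ℂ) : ℝ≥0∞ := QS s (fun k => (‖u k‖₊ : ℝ≥0∞))
noncomputable def ma (u : ℤ → ℂ) (k : ℤ) : ℝ≥0∞ :=
  if k = 0 then 0 else (‖u k‖₊ : ℝ≥0∞) * ((k.natAbs : ℝ≥0∞))⁻¹
noncomputable def K0 : ℝ≥0∞ := ∑' k : ℤ, if k = 0 then 0 else ((k.natAbs : ℝ≥0∞))⁻¹ ^ 2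

lemma one_le_natAbs {k : ℤ} (h : k ≠ 0) : (1 : ℝ≥0∞) ≤ (k.natAbs : ℝ≥0∞) := by
  exact_mod_cast Int.natAbs_pos.mpr h

lemma natAbs_ne_zero' {k : ℤ} (h : k ≠ 0) : (k.natAbs : ℝ≥0∞) ≠ 0 := by
  simpa using Int.natAbs_pos.mpr h

lemma natAbs_ne_top (k : ℤ) : (k.natAbs : ℝ≥0∞) ≠ ⊤ := ENNReal.natCast_ne_top _

lemma QS_mono (s : ℝ) {m m' : ℤ → ℝ≥0∞} (h : ∀ k, m k ≤ m' k) : QS s m ≤ QS s m' := by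
  refine ENNReal.tsum_le_tsum fun k => ?_
  by_cases hk : k = 0
  · simp [hk]
  · simp only [if_neg hk]
    exact mul_le_mul_right (pow_le_pow_left' (h k) 2) _

lemma QS_add (s : ℝ) (m m' : ℤ → ℝ≥0∞) :
    QS s (fun k => m k + m' k) ≤ 3 * QS s m + 3 * QS s m' := by
  have h : ∀ k : ℤ, (if k = 0 then 0 else EW s k * (m k + m' k) ^ 2)
      ≤ (3 * (if k = 0 then 0 else EW s k * m k ^ 2))
        + 3 * (if k = 0 then 0 else EW s k * m' k ^ 2) := by
    intro k
    by_cases hk : k = 0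
    · simp [hk]
    · simp only [if_neg hk]
      have hsq : (m k + m' k) ^ 2 ≤ 3 * m k ^ 2 + 3 * m' k ^ 2 := by
        have h2 : (m k + m' k) ^ 2 = m k ^ 2 + m' k ^ 2 + (m k * m' k + m k * m' k) := by ring
        have h3 : m k * m' k ≤ m k ^ 2 + m' k ^ 2 := mul_le_sq_add_sq _ _
        calc (m k + m' k) ^ 2
            ≤ m k ^ 2 + m' k ^ 2 + ((m k ^2 + m' k ^2) + (m k ^2 + m' k^2)) := by
              rw [h2]; exact add_le_add_right (add_le_add h3 h3) _
        _ = 3 * m k ^ 2 + 3 * m' k ^ 2 := by ring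
      calc EW s k * (m k + m' k) ^ 2 ≤ EW s k * (3 * m k ^ 2 + 3 * m' k ^ 2) :=
            mul_le_mul_right hsq _
      _ = 3 * (EW s k * m k ^ 2) + 3 * (EW s k * m' k ^ 2) := by ring
  calc QS s (fun k => m k + m' k) ≤ ∑' k, ((3 * (if k = 0 then 0 else EW s k * m k ^ 2))
        + 3 * (if k = 0 then 0 else EW s k * m' k ^ 2)) := ENNReal.tsum_le_tsum h
  _ = 3 * QS s m + 3 * QS s m' := by
      rw [ENNReal.tsum_add, ENNReal.tsum_mul_left, ENNReal.tsum_mul_left]; rfl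

/-- generic bridge -/
lemma tsum_ofReal_ne_top_iff {ι : Type*} (h : ι → ℝ) (hh : ∀ i, 0 ≤ h i) :
    (∑' i, ENNReal.ofReal (h i)) ≠ ⊤ ↔ Summable h := by
  have e : ∀ i, ENNReal.ofReal (h i) = ((h i).toNNReal : ℝ≥0∞) := fun i => rfl
  rw [tsum_congr e, ENNReal.tsum_coe_ne_top_iff_summable]
  constructor
  · intro hs
    have := NNReal.summable_coe.mpr hs
    refine this.congr fun i => Real.coe_toNNReal _ (hh i)
  · intro hs
    rw [← NNReal.summable_coe]
    exact hs.congr fun i => (Real.coe_toNNReal _ (hh i)).symm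

lemma toReal_tsum_ofReal {ι : Type*} (h : ι → ℝ) (hh : ∀ i, 0 ≤ h i) :
    (∑' i, ENNReal.ofReal (h i)).toReal = ∑' i, h i := by
  by_cases hs : Summable h
  · have e : ∀ i, ENNReal.ofReal (h i) = ((h i).toNNReal : ℝ≥0∞) := fun i => rfl
    have hs' : Summable (fun i => (h i).toNNReal) := by
      rw [← NNReal.summable_coe]
      exact hs.congr fun i => (Real.coe_toNNReal _ (hh i)).symm
    rw [tsum_congr e, ← ENNReal.coe_tsum hs', ENNReal.coe_toReal, NNReal.coe_tsum]
    exact tsum_congr fun i => Real.coe_toNNReal _ (hh i)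
  · rw [tsum_eq_zero_of_not_summable hs]
    have : (∑' i, ENNReal.ofReal (h i)) = ⊤ := by
      by_contra hne
      exact hs ((tsum_ofReal_ne_top_iff h hh).mp hne)
    rw [this, ENNReal.toReal_top]

lemma wt_nonneg (s : ℝ) (k : ℤ) : 0 ≤ wt s k :=
  Real.rpow_nonneg (by positivity) _

lemma EW_eq_ofReal_wt {s : ℝ} {k : ℤ} (hk : k ≠ 0) : EW s k = ENNReal.ofReal (wt s k) := by
  have h1 : ((|k| : ℤ) : ℝ) = ((k.natAbs : ℕ) : ℝ) := by
    rw [Nat.cast_natAbs]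
  have hpos : (0 : ℝ) < ((|k| : ℤ) : ℝ) := by
    have := Int.natAbs_pos.mpr hk
    rw [h1]; exact_mod_cast this
  rw [EW, wt, ← ENNReal.ofReal_rpow_of_pos hpos, h1, ENNReal.ofReal_natCast]

lemma ES_eq (s : ℝ) (u : ℤ → ℂ) :
    ES s u = ∑' k : {k : ℤ // k ≠ 0}, ENNReal.ofReal (wt s k.1 * ‖u k.1‖ ^ 2) := by
  have h2 : ES s u = ∑' k : ℤ,
      Set.indicator {k : ℤ | k ≠ 0} (fun k => ENNReal.ofReal (wt s k * ‖u k‖ ^ 2)) k := by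
    refine tsum_congr fun k => ?_
    by_cases hk : k = 0
    · simp [hk, Set.indicator]
    · rw [Set.indicator_of_mem (by exact hk : k ∈ {k : ℤ | k ≠ 0})]
      show (if k = 0 then 0 else EW s k * (‖u k‖₊ : ℝ≥0∞) ^ 2) = _
      rw [if_neg hk, ENNReal.ofReal_mul (wt_nonneg s k), EW_eq_ofReal_wt hk,
        ENNReal.ofReal_pow (norm_nonneg _), ofReal_norm_eq_coe_nnnorm]
  rw [h2, ← tsum_subtype {k : ℤ | k ≠ 0} (fun k => ENNReal.ofReal (wt s k * ‖u k‖ ^ 2))]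
  rfl

lemma memH_iff (s : ℝ) (u : ℤ → ℂ) : memH s u ↔ ES s u ≠ ⊤ := by
  rw [ES_eq, memH]
  exact (tsum_ofReal_ne_top_iff (fun k : {k : ℤ // k ≠ 0} => wt s k.1 * ‖u k.1‖ ^ 2)
    (fun k => mul_nonneg (wt_nonneg s k.1) (sq_nonneg _))).symm

lemma hnorm_sq (s : ℝ) (u : ℤ → ℂ) : hnorm s u ^ 2 = (ES s u).toReal := by
  rw [hnorm, Real.sq_sqrt (tsum_nonneg fun k : {k : ℤ // k ≠ 0} =>
      mul_nonneg (wt_nonneg s k.1) (sq_nonneg _)),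
    ES_eq, toReal_tsum_ofReal (fun k : {k : ℤ // k ≠ 0} => wt s k.1 * ‖u k.1‖ ^ 2)
      (fun k => mul_nonneg (wt_nonneg s k.1) (sq_nonneg _))]

lemma ES_zero_le (s : ℝ) (hs : 0 ≤ s) (u : ℤ → ℂ) : ES 0 u ≤ ES s u := by
  refine ENNReal.tsum_le_tsum fun k => ?_
  by_cases hk : k = 0
  · simp [hk]
  · simp only [if_neg hk]
    refine mul_le_mul_left ?_ _
    have h0 : EW 0 k = 1 := by rw [EW, mul_zero]; exact ENNReal.rpow_zero
    rw [h0, EW]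
    calc (1 : ℝ≥0∞) = (k.natAbs : ℝ≥0∞) ^ (0 : ℝ) := ENNReal.rpow_zero.symm
    _ ≤ (k.natAbs : ℝ≥0∞) ^ (2 * s) :=
        ENNReal.rpow_le_rpow_of_exponent_le (one_le_natAbs hk) (by linarith)

lemma sq_rpow (x : ℝ≥0∞) (s : ℝ) : (x ^ s) ^ (2:ℕ) = x ^ (2*s) := by
  rw [← ENNReal.rpow_natCast (x ^ s) 2, ← ENNReal.rpow_mul]
  norm_num [mul_comm]

lemma nnorm_intCast_enn (j : ℤ) : ((‖(j:ℂ)‖₊ : ℝ≥0∞)) = (j.natAbs : ℝ≥0∞) := by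
  have h : ‖(j:ℂ)‖ = ((j.natAbs : ℕ) : ℝ) := by
    rw [Complex.norm_intCast, ← Int.cast_abs]
    exact (Nat.cast_natAbs _).symm
  rw [← ofReal_norm_eq_coe_nnnorm, h, ENNReal.ofReal_natCast]

lemma K0_ne_top : K0 ≠ ⊤ := by
  have hsum : Summable (fun k : ℤ => if k = 0 then (0:ℝ) else ((k:ℝ))⁻¹ ^ 2) := by
    have h2 : Summable (fun k : ℤ => 1 / (k:ℝ) ^ 2) := Real.summable_one_div_int_pow.mpr one_lt_two
    refine h2.of_nonneg_of_le (fun k => by positivity) fun k => ?_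
    by_cases hk : k = 0
    · simp [hk]
    · rw [if_neg hk, inv_pow, inv_eq_one_div]
  have heq : K0 = ∑' k : ℤ, ENNReal.ofReal (if k = 0 then (0:ℝ) else ((k:ℝ))⁻¹ ^ 2) := by
    refine tsum_congr fun k => ?_
    by_cases hk : k = 0
    · simp [K0, hk]
    · show (if k = 0 then 0 else ((k.natAbs : ℝ≥0∞))⁻¹ ^ 2) = _
      rw [if_neg hk, if_neg hk]
      have hpos : (0:ℝ) < (k.natAbs : ℝ) := by
        have := Int.natAbs_pos.mpr hk; exact_mod_cast this
      have h1 : ((k.natAbs : ℝ≥0∞))⁻¹ = ENNReal.ofReal ((k.natAbs : ℝ))⁻¹ := by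
        rw [ENNReal.ofReal_inv_of_pos hpos, ENNReal.ofReal_natCast]
      have h2 : ((k:ℝ))⁻¹ ^ 2 = ((k.natAbs : ℝ))⁻¹ ^ 2 := by
        rw [show ((k.natAbs : ℕ):ℝ) = |(k:ℝ)| from by
          rw [← Int.cast_abs]; exact_mod_cast (Nat.cast_natAbs (α := ℝ) _)]
        rw [← abs_inv, sq_abs]
      rw [h1, h2, ENNReal.ofReal_pow (by positivity)]
  rw [heq]
  exact (tsum_ofReal_ne_top_iff _ fun k => by positivity).mpr hsum

lemma ma_le (u : ℤ → ℂ) (N : ℕ) :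
    (∀ j, ma (Plow N u) j ≤ ma u j) ∧ (∀ j, ma (Qhigh N u) j ≤ ma u j) := by
  constructor <;> intro j <;> by_cases hj : j = 0 <;> simp only [ma, if_pos, if_neg, hj] <;>
    try simp
  · refine mul_le_mul_left ?_ _
    show (‖(if |j| ≤ (N:ℤ) then u j else 0)‖₊ : ℝ≥0∞) ≤ _
    by_cases h : |j| ≤ (N:ℤ) <;> simp [h]
  · refine mul_le_mul_left ?_ _
    show (‖(if |j| ≤ (N:ℤ) then 0 else u j)‖₊ : ℝ≥0∞) ≤ _
    by_cases h : |j| ≤ (N:ℤ) <;> simp [h]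

lemma abs_le_iff_natAbs (j : ℤ) (N : ℕ) : |j| ≤ (N:ℤ) ↔ j.natAbs ≤ N := by
  rw [Int.abs_eq_natAbs]; exact_mod_cast Iff.rfl

lemma ma_Plow_support {u : ℤ → ℂ} {N : ℕ} {j : ℤ} (h : ma (Plow N u) j ≠ 0) :
    j ≠ 0 ∧ j.natAbs ≤ N := by
  by_cases hj : j = 0
  · exact absurd (by simp [ma, hj]) h
  refine ⟨hj, ?_⟩
  by_contra hN
  have : Plow N u j = 0 := by
    rw [Plow]
    simp only [if_neg (fun hc => hN ((abs_le_iff_natAbs j N).mp hc))]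
  exact h (by simp [ma, hj, this])

lemma ma_Qhigh_support {u : ℤ → ℂ} {N : ℕ} {j : ℤ} (h : ma (Qhigh N u) j ≠ 0) :
    j ≠ 0 ∧ N < j.natAbs := by
  by_cases hj : j = 0
  · exact absurd (by simp [ma, hj]) h
  refine ⟨hj, ?_⟩
  by_contra hN
  push_neg at hN
  have : Qhigh N u j = 0 := by
    rw [Qhigh]
    simp only [if_pos ((abs_le_iff_natAbs j N).mpr hN)]
  exact h (by simp [ma, hj, this])

/-- ℓ¹ bound for `ma`. -/
lemma ma_l1 (u : ℤ → ℂ) : (∑' j, ma u j) ^ 2 ≤ 2 * (K0 * ES 0 u) := by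
  have h : ∀ j : ℤ, ma u j = (if j = 0 then 0 else ((j.natAbs : ℝ≥0∞))⁻¹)
      * (if j = 0 then 0 else (‖u j‖₊ : ℝ≥0∞)) := by
    intro j; by_cases hj : j = 0 <;> simp [ma, hj, mul_comm]
  rw [tsum_congr h]
  refine (cs2 _ _).trans ?_
  refine mul_le_mul_right (mul_le_mul' ?_ ?_) 2
  · refine le_of_eq (tsum_congr fun j => ?_)
    by_cases hj : j = 0 <;> simp [K0, hj]
  · refine le_of_eq (tsum_congr fun j => ?_)
    by_cases hj : j = 0
    · simp [hj]
    · show _ = (if j = 0 then 0 else EW 0 j * (‖u j‖₊ : ℝ≥0∞) ^ 2)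
      have h0 : EW 0 j = 1 := by rw [EW, mul_zero]; exact ENNReal.rpow_zero
      rw [if_neg hj, if_neg hj, h0, one_mul]

set_option maxHeartbeats 800000 in
lemma hblee (s : ℝ) (N : ℕ) (b : ℤ → ℝ≥0∞) (B : ℤ → ℂ)
    (hb : ∀ j, b j ≤ ma B j) {j : ℤ} (h0 : b j ≠ 0) (hj : j ≠ 0) (hjN : N < j.natAbs) :
    ((j.natAbs : ℝ≥0∞) ^ s * b j) ^ 2
      ≤ ((N : ℝ≥0∞))⁻¹ ^ 2 * (if j = 0 then 0 else EW s j * (‖B j‖₊ : ℝ≥0∞) ^ 2) := by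
  have hble : b j ≤ (‖B j‖₊ : ℝ≥0∞) * ((N : ℝ≥0∞))⁻¹ := by
    refine (hb j).trans ?_
    rw [ma, if_neg hj]
    exact mul_le_mul_right (ENNReal.inv_le_inv.mpr (by exact_mod_cast le_of_lt hjN)) _
  calc ((j.natAbs : ℝ≥0∞) ^ s * b j) ^ 2
      ≤ ((j.natAbs : ℝ≥0∞) ^ s * ((‖B j‖₊ : ℝ≥0∞) * ((N : ℝ≥0∞))⁻¹)) ^ 2 :=
        pow_le_pow_left' (mul_le_mul_right hble _) 2
    _ = ((N : ℝ≥0∞))⁻¹ ^ 2 * (((j.natAbs : ℝ≥0∞) ^ s) ^ 2 * (‖B j‖₊ : ℝ≥0∞) ^ 2) := by ring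
    _ = ((N : ℝ≥0∞))⁻¹ ^ 2 * (if j = 0 then 0 else EW s j * (‖B j‖₊ : ℝ≥0∞) ^ 2) := by
        rw [if_neg hj, sq_rpow]; rfl


/-- weighted ℓ² bound with `1/N` gain for high-supported minorants of `ma`. -/
lemma wma_l2 (s : ℝ) (N : ℕ) (b : ℤ → ℝ≥0∞) (B : ℤ → ℂ)
    (hb : ∀ j, b j ≤ ma B j) (hbS : ∀ j, b j ≠ 0 → N < j.natAbs) :
    ∑' j, ((j.natAbs : ℝ≥0∞) ^ s * b j) ^ 2 ≤ ((N : ℝ≥0∞))⁻¹ ^ 2 * ES s B := by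
  have key : ∀ j : ℤ, ((j.natAbs : ℝ≥0∞) ^ s * b j) ^ 2
      ≤ ((N : ℝ≥0∞))⁻¹ ^ 2 * (if j = 0 then 0 else EW s j * (‖B j‖₊ : ℝ≥0∞) ^ 2) := by
    intro j
    by_cases h0 : b j = 0
    · simp [h0]
    have hj : j ≠ 0 := by
      intro hc
      refine h0 (le_antisymm ((hb j).trans ?_) (zero_le))
      simp [ma, hc]
    have hjN : N < j.natAbs := hbS j h0
    exact hblee s N b B hb h0 hj hjN
  refine (ENNReal.tsum_le_tsum key).trans ?_
  rw [ENNReal.tsum_mul_left]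
  rfl

lemma natAbs_tri (k j : ℤ) : k.natAbs ≤ j.natAbs + (k - j).natAbs := by
  have := Int.natAbs_add_le j (k - j)
  simpa [show j + (k - j) = k from by ring] using this

lemma rpow_le_two_rpow {m n : ℕ} (s : ℝ) (hs : 0 ≤ s) (h : m ≤ 2 * n) :
    ((m : ℝ≥0∞)) ^ s ≤ (2:ℝ≥0∞) ^ s * ((n : ℝ≥0∞)) ^ s := by
  rw [← ENNReal.mul_rpow_of_nonneg _ _ hs]
  refine ENNReal.rpow_le_rpow ?_ hs
  exact_mod_cast h

lemma key_PQ (s : ℝ) (hs : 0 ≤ s) (N : ℕ) (a b : ℤ → ℝ≥0∞) (A B : ℤ → ℂ)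
    (ha : ∀ j, a j ≤ ma A j) (haS : ∀ j, a j ≠ 0 → j.natAbs ≤ N)
    (hb : ∀ j, b j ≤ ma B j) (hbS : ∀ j, b j ≠ 0 → N < j.natAbs) :
    QS s (fun k => ∑' j, a j * b (k - j))
      ≤ (2:ℝ≥0∞) ^ (2*s) * 4 * K0 * ((N : ℝ≥0∞))⁻¹ ^ 2 * (ES s A * ES s B) := by
  set wb : ℤ → ℝ≥0∞ := fun j => ((j.natAbs : ℝ≥0∞)) ^ s * b j with hwb
  have hpt : ∀ k : ℤ, ((k.natAbs : ℝ≥0∞)) ^ s * ∑' j, a j * b (k - j)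
      ≤ (2:ℝ≥0∞) ^ s * ∑' j, a j * wb (k - j) := by
    intro k
    rw [← ENNReal.tsum_mul_left, ← ENNReal.tsum_mul_left]
    refine ENNReal.tsum_le_tsum fun j => ?_
    by_cases h1 : a j = 0
    · simp [h1]
    by_cases h2 : b (k - j) = 0
    · simp [hwb, h2]
    have hja : j.natAbs ≤ N := haS j h1
    have hjb : N < (k - j).natAbs := hbS _ h2
    have htri : k.natAbs ≤ 2 * (k - j).natAbs := by
      have := natAbs_tri k j
      omega
    calc ((k.natAbs : ℝ≥0∞)) ^ s * (a j * b (k - j))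
        ≤ ((2:ℝ≥0∞) ^ s * (((k - j).natAbs : ℝ≥0∞)) ^ s) * (a j * b (k - j)) :=
          mul_le_mul_left (rpow_le_two_rpow s hs htri) _
      _ = (2:ℝ≥0∞) ^ s * (a j * wb (k - j)) := by rw [hwb]; ring
  have hQS : QS s (fun k => ∑' j, a j * b (k - j))
      ≤ (2:ℝ≥0∞) ^ (2*s) * ∑' k, (∑' j, a j * wb (k - j)) ^ 2 := by
    rw [← ENNReal.tsum_mul_left]
    refine ENNReal.tsum_le_tsum fun k => ?_
    by_cases hk : k = 0
    · simp [hk]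
    simp only [if_neg hk]
    have e1 : EW s k * (∑' j, a j * b (k - j)) ^ 2
        = (((k.natAbs : ℝ≥0∞)) ^ s * ∑' j, a j * b (k - j)) ^ 2 := by
      rw [mul_pow, sq_rpow]; rfl
    rw [e1]
    calc (((k.natAbs : ℝ≥0∞)) ^ s * ∑' j, a j * b (k - j)) ^ 2
        ≤ ((2:ℝ≥0∞) ^ s * ∑' j, a j * wb (k - j)) ^ 2 := pow_le_pow_left' (hpt k) 2
      _ = (2:ℝ≥0∞) ^ (2*s) * (∑' j, a j * wb (k - j)) ^ 2 := by rw [mul_pow, sq_rpow]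
  refine hQS.trans ?_
  have hy := young a wb
  have hl1 : (∑' j, a j) ^ 2 ≤ 2 * (K0 * ES s A) := by
    refine le_trans (pow_le_pow_left' (ENNReal.tsum_le_tsum ha) 2) ?_
    refine (ma_l1 A).trans ?_
    exact mul_le_mul_right (mul_le_mul_right (ES_zero_le s hs A) K0) 2
  have hl2 : ∑' j, wb j ^ 2 ≤ ((N : ℝ≥0∞))⁻¹ ^ 2 * ES s B := wma_l2 s N b B hb hbS
  calc (2:ℝ≥0∞) ^ (2*s) * ∑' k, (∑' j, a j * wb (k - j)) ^ 2
      ≤ (2:ℝ≥0∞) ^ (2*s) * (2 * ((∑' j, a j) ^ 2 * ∑' j, wb j ^ 2)) :=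
        mul_le_mul_right hy _
    _ ≤ (2:ℝ≥0∞) ^ (2*s) * (2 * ((2 * (K0 * ES s A)) * (((N : ℝ≥0∞))⁻¹ ^ 2 * ES s B))) :=
        mul_le_mul_right (mul_le_mul_right (mul_le_mul' hl1 hl2) 2) _
    _ = (2:ℝ≥0∞) ^ (2*s) * 4 * K0 * ((N : ℝ≥0∞))⁻¹ ^ 2 * (ES s A * ES s B) := by ring

lemma key_QQ (s : ℝ) (hs : 0 ≤ s) (N : ℕ) (a b : ℤ → ℝ≥0∞) (A B : ℤ → ℂ)
    (ha : ∀ j, a j ≤ ma A j) (haS : ∀ j, a j ≠ 0 → N < j.natAbs)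
    (hb : ∀ j, b j ≤ ma B j) (hbS : ∀ j, b j ≠ 0 → N < j.natAbs) :
    QS s (fun k => ∑' j, a j * b (k - j))
      ≤ (2:ℝ≥0∞) ^ (2*s) * 24 * K0 * ((N : ℝ≥0∞))⁻¹ ^ 2 * (ES s A * ES s B) := by
  set wa : ℤ → ℝ≥0∞ := fun j => ((j.natAbs : ℝ≥0∞)) ^ s * a j with hwa
  set wb : ℤ → ℝ≥0∞ := fun j => ((j.natAbs : ℝ≥0∞)) ^ s * b j with hwb
  have hpt : ∀ k : ℤ, ((k.natAbs : ℝ≥0∞)) ^ s * ∑' j, a j * b (k - j)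
      ≤ (2:ℝ≥0∞) ^ s * ((∑' j, wa j * b (k - j)) + ∑' j, a j * wb (k - j)) := by
    intro k
    rw [← ENNReal.tsum_mul_left, ← ENNReal.tsum_add, ← ENNReal.tsum_mul_left]
    refine ENNReal.tsum_le_tsum fun j => ?_
    by_cases h1 : a j = 0
    · simp [h1, hwa]
    by_cases h2 : b (k - j) = 0
    · simp [hwb, h2]
    have htri := natAbs_tri k j
    rcases le_total j.natAbs (k - j).natAbs with hc | hc
    · have h2n : k.natAbs ≤ 2 * (k - j).natAbs := by omega
      calc ((k.natAbs : ℝ≥0∞)) ^ s * (a j * b (k - j))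
          ≤ ((2:ℝ≥0∞) ^ s * (((k - j).natAbs : ℝ≥0∞)) ^ s) * (a j * b (k - j)) :=
            mul_le_mul_left (rpow_le_two_rpow s hs h2n) _
        _ = (2:ℝ≥0∞) ^ s * (a j * wb (k - j)) := by rw [hwb]; ring
        _ ≤ (2:ℝ≥0∞) ^ s * (wa j * b (k - j) + a j * wb (k - j)) :=
            mul_le_mul_right le_add_self _
    · have h2n : k.natAbs ≤ 2 * j.natAbs := by omega
      calc ((k.natAbs : ℝ≥0∞)) ^ s * (a j * b (k - j))
          ≤ ((2:ℝ≥0∞) ^ s * ((j.natAbs : ℝ≥0∞)) ^ s) * (a j * b (k - j)) :=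
            mul_le_mul_left (rpow_le_two_rpow s hs h2n) _
        _ = (2:ℝ≥0∞) ^ s * (wa j * b (k - j)) := by rw [hwa]; ring
        _ ≤ (2:ℝ≥0∞) ^ s * (wa j * b (k - j) + a j * wb (k - j)) :=
            mul_le_mul_right le_self_add _
  have hQS : QS s (fun k => ∑' j, a j * b (k - j))
      ≤ (2:ℝ≥0∞) ^ (2*s) *
        ∑' k, ((∑' j, wa j * b (k - j)) + ∑' j, a j * wb (k - j)) ^ 2 := by
    rw [← ENNReal.tsum_mul_left]
    refine ENNReal.tsum_le_tsum fun k => ?_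
    by_cases hk : k = 0
    · simp [hk]
    simp only [if_neg hk]
    have e1 : EW s k * (∑' j, a j * b (k - j)) ^ 2
        = (((k.natAbs : ℝ≥0∞)) ^ s * ∑' j, a j * b (k - j)) ^ 2 := by
      rw [mul_pow, sq_rpow]; rfl
    rw [e1]
    calc (((k.natAbs : ℝ≥0∞)) ^ s * ∑' j, a j * b (k - j)) ^ 2
        ≤ ((2:ℝ≥0∞) ^ s * ((∑' j, wa j * b (k - j)) + ∑' j, a j * wb (k - j))) ^ 2 :=
          pow_le_pow_left' (hpt k) 2
      _ = (2:ℝ≥0∞) ^ (2*s)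
            * ((∑' j, wa j * b (k - j)) + ∑' j, a j * wb (k - j)) ^ 2 := by
          rw [mul_pow, sq_rpow]
  refine hQS.trans ?_
  have hsq : ∀ k : ℤ, ((∑' j, wa j * b (k - j)) + ∑' j, a j * wb (k - j)) ^ 2
      ≤ 3 * (∑' j, wa j * b (k - j)) ^ 2 + 3 * (∑' j, a j * wb (k - j)) ^ 2 := by
    intro k
    set x := ∑' j, wa j * b (k - j)
    set y := ∑' j, a j * wb (k - j)
    have h3 : x * y ≤ x ^ 2 + y ^ 2 := mul_le_sq_add_sq _ _
    calc (x + y) ^ 2 = x ^ 2 + y ^ 2 + (x * y + x * y) := by ring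
      _ ≤ x ^ 2 + y ^ 2 + ((x ^ 2 + y ^ 2) + (x ^ 2 + y ^ 2)) :=
          add_le_add_right (add_le_add h3 h3) _
      _ = 3 * x ^ 2 + 3 * y ^ 2 := by ring
  have hterm1 : ∑' k, (∑' j, wa j * b (k - j)) ^ 2
      ≤ 2 * ((2 * (K0 * ES s B)) * (((N : ℝ≥0∞))⁻¹ ^ 2 * ES s A)) := by
    have hcomm : ∀ k : ℤ, (∑' j, wa j * b (k - j)) = ∑' j, b j * wa (k - j) :=
      fun k => econv_comm wa b k
    rw [tsum_congr fun k => by rw [hcomm k]]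
    refine (young b wa).trans ?_
    refine mul_le_mul_right (mul_le_mul' ?_ ?_) 2
    · refine le_trans (pow_le_pow_left' (ENNReal.tsum_le_tsum hb) 2) ?_
      refine (ma_l1 B).trans ?_
      exact mul_le_mul_right (mul_le_mul_right (ES_zero_le s hs B) K0) 2
    · exact wma_l2 s N a A ha haS
  have hterm2 : ∑' k, (∑' j, a j * wb (k - j)) ^ 2
      ≤ 2 * ((2 * (K0 * ES s A)) * (((N : ℝ≥0∞))⁻¹ ^ 2 * ES s B)) := by
    refine (young a wb).trans ?_
    refine mul_le_mul_right (mul_le_mul' ?_ ?_) 2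
    · refine le_trans (pow_le_pow_left' (ENNReal.tsum_le_tsum ha) 2) ?_
      refine (ma_l1 A).trans ?_
      exact mul_le_mul_right (mul_le_mul_right (ES_zero_le s hs A) K0) 2
    · exact wma_l2 s N b B hb hbS
  calc (2:ℝ≥0∞) ^ (2*s) * ∑' k, ((∑' j, wa j * b (k - j)) + ∑' j, a j * wb (k - j)) ^ 2
      ≤ (2:ℝ≥0∞) ^ (2*s) * ∑' k, (3 * (∑' j, wa j * b (k - j)) ^ 2
          + 3 * (∑' j, a j * wb (k - j)) ^ 2) :=
        mul_le_mul_right (ENNReal.tsum_le_tsum hsq) _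
    _ = (2:ℝ≥0∞) ^ (2*s) * (3 * ∑' k, (∑' j, wa j * b (k - j)) ^ 2
          + 3 * ∑' k, (∑' j, a j * wb (k - j)) ^ 2) := by
        rw [ENNReal.tsum_add, ENNReal.tsum_mul_left, ENNReal.tsum_mul_left]
    _ ≤ (2:ℝ≥0∞) ^ (2*s) * (3 * (2 * ((2 * (K0 * ES s B)) * (((N : ℝ≥0∞))⁻¹ ^ 2 * ES s A)))
          + 3 * (2 * ((2 * (K0 * ES s A)) * (((N : ℝ≥0∞))⁻¹ ^ 2 * ES s B)))) :=
        mul_le_mul_right (add_le_add (mul_le_mul_right hterm1 3)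
          (mul_le_mul_right hterm2 3)) _
    _ = (2:ℝ≥0∞) ^ (2*s) * 24 * K0 * ((N : ℝ≥0∞))⁻¹ ^ 2 * (ES s A * ES s B) := by ring

lemma key_QF (s : ℝ) (hs : 0 ≤ s) (N : ℕ) (a : ℤ → ℝ≥0∞) (A B : ℤ → ℂ)
    (ha : ∀ j, a j ≤ ma A j) (haS : ∀ j, a j ≠ 0 → N < j.natAbs) :
    QS s (fun k => ∑' j, a j * ma B (k - j))
      ≤ (2:ℝ≥0∞) ^ (2*s) * 84 * K0 * ((N : ℝ≥0∞))⁻¹ ^ 2 * (ES s A * ES s B) := by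
  set bP : ℤ → ℝ≥0∞ := fun j => if j.natAbs ≤ N then ma B j else 0 with hbP
  set bQ : ℤ → ℝ≥0∞ := fun j => if j.natAbs ≤ N then 0 else ma B j with hbQ
  have hsplit : ∀ j, ma B j = bP j + bQ j := by
    intro j; by_cases h : j.natAbs ≤ N <;> simp [hbP, hbQ, h]
  have hconv : ∀ k : ℤ, (∑' j, a j * ma B (k - j))
      = (∑' j, a j * bP (k - j)) + ∑' j, a j * bQ (k - j) := by
    intro k
    rw [← ENNReal.tsum_add]
    refine tsum_congr fun j => ?_
    rw [hsplit (k - j), mul_add]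
  have h1 : QS s (fun k => ∑' j, a j * ma B (k - j))
      ≤ 3 * QS s (fun k => ∑' j, a j * bP (k - j))
        + 3 * QS s (fun k => ∑' j, a j * bQ (k - j)) := by
    have := QS_add s (fun k => ∑' j, a j * bP (k - j)) (fun k => ∑' j, a j * bQ (k - j))
    refine le_trans (le_of_eq ?_) this
    unfold QS
    exact tsum_congr fun k => by simp only [hconv k]
  refine h1.trans ?_
  have hP : QS s (fun k => ∑' j, a j * bP (k - j))
      ≤ (2:ℝ≥0∞) ^ (2*s) * 4 * K0 * ((N : ℝ≥0∞))⁻¹ ^ 2 * (ES s B * ES s A) := by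
    have hcomm : ∀ k : ℤ, (∑' j, a j * bP (k - j)) = ∑' j, bP j * a (k - j) :=
      fun k => econv_comm a bP k
    have he : QS s (fun k => ∑' j, a j * bP (k - j))
        = QS s (fun k => ∑' j, bP j * a (k - j)) := by
      unfold QS; exact tsum_congr fun k => by simp only [hcomm k]
    rw [he]
    refine key_PQ s hs N bP a B A ?_ ?_ ha haS
    · intro j; by_cases h : j.natAbs ≤ N <;> simp [hbP, h]
    · intro j hj
      by_contra hc
      exact hj (by simp [hbP, if_neg hc])
  have hQ : QS s (fun k => ∑' j, a j * bQ (k - j))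
      ≤ (2:ℝ≥0∞) ^ (2*s) * 24 * K0 * ((N : ℝ≥0∞))⁻¹ ^ 2 * (ES s A * ES s B) := by
    refine key_QQ s hs N a bQ A B ha haS ?_ ?_
    · intro j; by_cases h : j.natAbs ≤ N <;> simp [hbQ, h]
    · intro j hj
      by_contra hc
      push_neg at hc
      exact hj (by simp [hbQ, if_pos hc])
  calc 3 * QS s (fun k => ∑' j, a j * bP (k - j))
        + 3 * QS s (fun k => ∑' j, a j * bQ (k - j))
      ≤ 3 * ((2:ℝ≥0∞) ^ (2*s) * 4 * K0 * ((N : ℝ≥0∞))⁻¹ ^ 2 * (ES s B * ES s A))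
        + 3 * ((2:ℝ≥0∞) ^ (2*s) * 24 * K0 * ((N : ℝ≥0∞))⁻¹ ^ 2 * (ES s A * ES s B)) :=
        add_le_add (mul_le_mul_right hP 3) (mul_le_mul_right hQ 3)
    _ = (2:ℝ≥0∞) ^ (2*s) * 84 * K0 * ((N : ℝ≥0∞))⁻¹ ^ 2 * (ES s A * ES s B) := by ring

lemma tsum_reflect (g : ℤ → ℝ≥0∞) (k : ℤ) : ∑' j, g (k - j) = ∑' j, g j :=
  (Equiv.subLeft k).tsum_eq g

lemma enn_norm_tsum_le (F : ℤ → ℂ) :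
    ((‖∑' j, F j‖₊ : ℝ≥0∞)) ≤ ∑' j, ((‖F j‖₊ : ℝ≥0∞)) := by
  by_cases h : Summable fun j => ‖F j‖
  · have hnn : Summable fun j => ‖F j‖₊ := by
      rw [← NNReal.summable_coe]
      exact h.congr fun j => (coe_nnnorm (F j)).symm
    calc ((‖∑' j, F j‖₊ : ℝ≥0∞)) ≤ ((∑' j, ‖F j‖₊ : ℝ≥0) : ℝ≥0∞) := by
          exact_mod_cast nnnorm_tsum_le hnn
    _ = ∑' j, ((‖F j‖₊ : ℝ≥0∞)) := ENNReal.coe_tsum hnn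
  · have hF : ¬ Summable F := fun hF => h (summable_norm_iff.mpr hF)
    rw [tsum_eq_zero_of_not_summable hF]
    simp

lemma osc2_norm (t : ℝ) (k k1 : ℤ) : ‖osc2 t k k1‖ = 1 := by
  rw [osc2]
  have he : (3 * Complex.I * (k:ℂ) * (k1:ℂ) * ((k - k1 : ℤ):ℂ) * (t:ℂ))
      = (((3 * (k:ℝ) * (k1:ℝ) * ((k - k1 : ℤ):ℝ) * t : ℝ)) : ℂ) * Complex.I := by
    push_cast; ring
  rw [he, Complex.norm_exp_ofReal_mul_I]

lemma norm_intC (j : ℤ) : ‖(j:ℂ)‖ = ((j.natAbs : ℕ) : ℝ) := by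
  rw [Complex.norm_intCast, ← Int.cast_abs]
  exact (Nat.cast_natAbs _).symm

lemma S2_nnorm_le (t : ℝ) (φ ψ : ℤ → ℂ) (k j : ℤ) :
    ((‖(if j ≠ 0 ∧ k - j ≠ 0 then
        osc2 t k j * φ j * ψ (k - j) / ((j:ℂ) * ((k - j : ℤ):ℂ)) else 0)‖₊ : ℝ≥0∞))
      ≤ ma φ j * ma ψ (k - j) := by
  split_ifs with h
  · obtain ⟨h1, h2⟩ := h
    have hj : (0:ℝ) < ((j.natAbs : ℕ):ℝ) := by
      have := Int.natAbs_pos.mpr h1; exact_mod_cast this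
    have hkj : (0:ℝ) < (((k - j).natAbs : ℕ):ℝ) := by
      have := Int.natAbs_pos.mpr h2; exact_mod_cast this
    have hnrm : ‖osc2 t k j * φ j * ψ (k - j) / ((j:ℂ) * ((k - j : ℤ):ℂ))‖
        = (‖φ j‖ * ‖ψ (k - j)‖) / (((j.natAbs : ℕ):ℝ) * (((k - j).natAbs : ℕ):ℝ)) := by
      rw [norm_div, norm_mul, norm_mul, norm_mul, osc2_norm, one_mul, norm_intC, norm_intC]
    rw [← ofReal_norm_eq_coe_nnnorm, hnrm,
      ENNReal.ofReal_div_of_pos (by positivity),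
      ENNReal.ofReal_mul (norm_nonneg _), ENNReal.ofReal_mul (by positivity),
      ofReal_norm_eq_coe_nnnorm, ofReal_norm_eq_coe_nnnorm,
      ENNReal.ofReal_natCast, ENNReal.ofReal_natCast]
    have hmulinv : (((j.natAbs : ℕ):ℝ≥0∞) * (((k - j).natAbs : ℕ):ℝ≥0∞))⁻¹
        = ((j.natAbs : ℕ):ℝ≥0∞)⁻¹ * (((k - j).natAbs : ℕ):ℝ≥0∞)⁻¹ :=
      ENNReal.mul_inv (Or.inl (natAbs_ne_zero' h1)) (Or.inl (natAbs_ne_top j))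
    rw [div_eq_mul_inv, hmulinv, ma, ma, if_neg h1, if_neg h2]
    exact le_of_eq (by ring)
  · simp

lemma B2_pointwise (t : ℝ) (φ ψ : ℤ → ℂ) (k : ℤ) :
    ((‖B2 t φ ψ k‖₊ : ℝ≥0∞)) ≤ ∑' j, ma φ j * ma ψ (k - j) := by
  show ((‖(1/6 : ℂ) * _‖₊ : ℝ≥0∞)) ≤ _
  rw [nnnorm_mul, ENNReal.coe_mul]
  have h16 : ((‖(1/6 : ℂ)‖₊ : ℝ≥0∞)) ≤ 1 := by
    rw [← ofReal_norm_eq_coe_nnnorm]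
    rw [show ‖(1/6 : ℂ)‖ = 1/6 by simp]
    exact ENNReal.ofReal_le_one.mpr (by norm_num)
  calc ((‖(1/6 : ℂ)‖₊ : ℝ≥0∞)) * _ ≤ 1 * _ := mul_le_mul_left h16 _
  _ = _ := one_mul _
  _ ≤ ∑' j, ma φ j * ma ψ (k - j) :=
      (enn_norm_tsum_le _).trans (ENNReal.tsum_le_tsum (S2_nnorm_le t φ ψ k))

lemma ma_sq_tsum_le (u : ℤ → ℂ) : ∑' j, ma u j ^ 2 ≤ ES 0 u := by
  refine ENNReal.tsum_le_tsum fun j => ?_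
  by_cases hj : j = 0
  · simp [ma, hj]
  · rw [ma, if_neg hj, if_neg hj]
    have h0 : EW 0 j = 1 := by rw [EW, mul_zero]; exact ENNReal.rpow_zero
    rw [h0, one_mul, mul_pow]
    calc (‖u j‖₊ : ℝ≥0∞) ^ 2 * (((j.natAbs : ℕ):ℝ≥0∞))⁻¹ ^ 2
        ≤ (‖u j‖₊ : ℝ≥0∞) ^ 2 * 1 ^ 2 := by
          refine mul_le_mul_right (pow_le_pow_left' ?_ 2) _
          exact ENNReal.inv_le_one.mpr (one_le_natAbs hj)
    _ = (‖u j‖₊ : ℝ≥0∞) ^ 2 := by rw [one_pow, mul_one]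

lemma S2_summable (t : ℝ) (φ ψ : ℤ → ℂ) (hφ : ES 0 φ ≠ ⊤) (hψ : ES 0 ψ ≠ ⊤) (k : ℤ) :
    Summable fun j : ℤ => (if j ≠ 0 ∧ k - j ≠ 0 then
      osc2 t k j * φ j * ψ (k - j) / ((j:ℂ) * ((k - j : ℤ):ℂ)) else 0) := by
  refine Summable.of_norm ?_
  refine (tsum_ofReal_ne_top_iff _ fun j => norm_nonneg _).mp ?_
  have hb : ∀ j : ℤ, ENNReal.ofReal ‖(if j ≠ 0 ∧ k - j ≠ 0 then
      osc2 t k j * φ j * ψ (k - j) / ((j:ℂ) * ((k - j : ℤ):ℂ)) else 0)‖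
      ≤ ma φ j ^ 2 + ma ψ (k - j) ^ 2 := by
    intro j
    rw [ofReal_norm_eq_coe_nnnorm]
    exact (S2_nnorm_le t φ ψ k j).trans (mul_le_sq_add_sq _ _)
  refine ne_top_of_le_ne_top ?_ (ENNReal.tsum_le_tsum hb)
  rw [ENNReal.tsum_add]
  refine ENNReal.add_ne_top.mpr ⟨ne_top_of_le_ne_top hφ (ma_sq_tsum_le φ), ?_⟩
  rw [tsum_reflect (fun j => ma ψ j ^ 2) k]
  exact ne_top_of_le_ne_top hψ (ma_sq_tsum_le ψ)

lemma ES_sub_le (s : ℝ) (φ φ' : ℤ → ℂ) :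
    ES s (fun i => φ i - φ' i) ≤ 3 * ES s φ + 3 * ES s φ' := by
  refine le_trans (QS_mono s ?_) (QS_add s (fun k => (‖φ k‖₊ : ℝ≥0∞))
    (fun k => (‖φ' k‖₊ : ℝ≥0∞)))
  intro k
  calc ((‖φ k - φ' k‖₊ : ℝ≥0∞)) ≤ ((‖φ k‖₊ + ‖φ' k‖₊ : ℝ≥0) : ℝ≥0∞) := by
        exact_mod_cast nnnorm_sub_le _ _
  _ = _ := ENNReal.coe_add _ _

lemma B2_bilin (t : ℝ) (φ φ' ψ ψ' : ℤ → ℂ)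
    (hφ : ES 0 φ ≠ ⊤) (hφ' : ES 0 φ' ≠ ⊤) (hψ : ES 0 ψ ≠ ⊤) (hψ' : ES 0 ψ' ≠ ⊤) (k : ℤ) :
    B2 t φ ψ k - B2 t φ' ψ' k
      = B2 t (fun i => φ i - φ' i) ψ k + B2 t φ' (fun i => ψ i - ψ' i) k := by
  have hdφ : ES 0 (fun i => φ i - φ' i) ≠ ⊤ := by
    refine ne_top_of_le_ne_top ?_ (ES_sub_le 0 φ φ')
    exact ENNReal.add_ne_top.mpr ⟨ENNReal.mul_ne_top (by norm_num) hφ,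
      ENNReal.mul_ne_top (by norm_num) hφ'⟩
  have hdψ : ES 0 (fun i => ψ i - ψ' i) ≠ ⊤ := by
    refine ne_top_of_le_ne_top ?_ (ES_sub_le 0 ψ ψ')
    exact ENNReal.add_ne_top.mpr ⟨ENNReal.mul_ne_top (by norm_num) hψ,
      ENNReal.mul_ne_top (by norm_num) hψ'⟩
  have s1 := S2_summable t φ ψ hφ hψ k
  have s2 := S2_summable t φ' ψ' hφ' hψ' k
  have s3 := S2_summable t (fun i => φ i - φ' i) ψ hdφ hψ k
  have s4 := S2_summable t φ' (fun i => ψ i - ψ' i) hφ' hdψ k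
  show (1/6 : ℂ) * _ - (1/6 : ℂ) * _ = (1/6 : ℂ) * _ + (1/6 : ℂ) * _
  rw [← mul_sub, ← mul_add]
  congr 1
  rw [← Summable.tsum_sub s1 s2, ← Summable.tsum_add s3 s4]
  refine tsum_congr fun j => ?_
  by_cases h : j ≠ 0 ∧ k - j ≠ 0
  · simp only [if_pos h]
    field_simp
    ring
  · simp only [if_neg h]
    simp

def CC (s : ℝ) : ℝ≥0∞ := (2:ℝ≥0∞) ^ (2*s) * 84 * (K0 + 1)

lemma CC_ne_top (s : ℝ) (hs : 0 ≤ s) : CC s ≠ ⊤ := by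
  refine ENNReal.mul_ne_top (ENNReal.mul_ne_top ?_ (by norm_num)) ?_
  · exact ENNReal.rpow_ne_top_of_nonneg (by linarith) (by norm_num)
  · exact ENNReal.add_ne_top.mpr ⟨K0_ne_top, by norm_num⟩

lemma le_CC_mul (s : ℝ) (c : ℝ≥0∞) (hc : c ≤ 84) (W Z : ℝ≥0∞) :
    (2:ℝ≥0∞) ^ (2*s) * c * K0 * W * Z ≤ CC s * W * Z := by
  have h1 : c * K0 ≤ 84 * (K0 + 1) :=
    mul_le_mul' (hc.trans le_rfl) le_self_add
  calc (2:ℝ≥0∞) ^ (2*s) * c * K0 * W * Z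
      = (c * K0) * ((2:ℝ≥0∞) ^ (2*s) * W * Z) := by ring
    _ ≤ (84 * (K0 + 1)) * ((2:ℝ≥0∞) ^ (2*s) * W * Z) := mul_le_mul_left h1 _
    _ = CC s * W * Z := by rw [CC]; ring

lemma piece_PQ (s : ℝ) (hs : 0 ≤ s) (N : ℕ) (t : ℝ) (x y : ℤ → ℂ) :
    ES s (B2 t (Plow N x) (Qhigh N y)) ≤ CC s * ((N:ℝ≥0∞))⁻¹ ^ 2 * (ES s x * ES s y) := by
  have h1 : ES s (B2 t (Plow N x) (Qhigh N y))
      ≤ QS s (fun k => ∑' j, ma (Plow N x) j * ma (Qhigh N y) (k - j)) :=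
    QS_mono s fun k => B2_pointwise t _ _ k
  refine h1.trans ?_
  have h2 := key_PQ s hs N (ma (Plow N x)) (ma (Qhigh N y)) x y
    (ma_le x N).1 (fun j hj => (ma_Plow_support hj).2)
    (ma_le y N).2 (fun j hj => (ma_Qhigh_support hj).2)
  exact h2.trans (le_CC_mul s 4 (by norm_num) _ _)

lemma piece_QF (s : ℝ) (hs : 0 ≤ s) (N : ℕ) (t : ℝ) (x y : ℤ → ℂ) :
    ES s (B2 t (Qhigh N x) y) ≤ CC s * ((N:ℝ≥0∞))⁻¹ ^ 2 * (ES s x * ES s y) := by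
  have h1 : ES s (B2 t (Qhigh N x) y)
      ≤ QS s (fun k => ∑' j, ma (Qhigh N x) j * ma y (k - j)) :=
    QS_mono s fun k => B2_pointwise t _ _ k
  refine h1.trans ?_
  have h2 := key_QF s hs N (ma (Qhigh N x)) x y
    (ma_le x N).2 (fun j hj => (ma_Qhigh_support hj).2)
  exact h2.trans (le_CC_mul s 84 (by norm_num) _ _)

lemma QS_sum4 (s : ℝ) (m1 m2 m3 m4 : ℤ → ℝ≥0∞) :
    QS s (fun k => m1 k + m2 k + m3 k + m4 k)
      ≤ 27 * (QS s m1 + QS s m2 + QS s m3 + QS s m4) := by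
  have h1 : QS s (fun k => m1 k + m2 k + m3 k + m4 k)
      ≤ 3 * QS s (fun k => m1 k + m2 k + m3 k) + 3 * QS s m4 :=
    QS_add s (fun k => m1 k + m2 k + m3 k) m4
  have h2 : QS s (fun k => m1 k + m2 k + m3 k)
      ≤ 3 * QS s (fun k => m1 k + m2 k) + 3 * QS s m3 :=
    QS_add s (fun k => m1 k + m2 k) m3
  have h3 : QS s (fun k => m1 k + m2 k) ≤ 3 * QS s m1 + 3 * QS s m2 := QS_add s m1 m2
  calc QS s (fun k => m1 k + m2 k + m3 k + m4 k)
      ≤ 3 * QS s (fun k => m1 k + m2 k + m3 k) + 3 * QS s m4 := h1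
    _ ≤ 3 * (3 * QS s (fun k => m1 k + m2 k) + 3 * QS s m3) + 3 * QS s m4 :=
        add_le_add_left (mul_le_mul_right h2 3) _
    _ ≤ 3 * (3 * (3 * QS s m1 + 3 * QS s m2) + 3 * QS s m3) + 3 * QS s m4 :=
        add_le_add_left (mul_le_mul_right (add_le_add_left (mul_le_mul_right h3 3) _) 3) _
    _ = 27 * QS s m1 + 27 * QS s m2 + 9 * QS s m3 + 3 * QS s m4 := by ring
    _ ≤ 27 * QS s m1 + 27 * QS s m2 + 27 * QS s m3 + 27 * QS s m4 := by
        refine add_le_add (add_le_add (add_le_add le_rfl le_rfl) ?_) ?_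
        · exact mul_le_mul_left (by norm_num) _
        · exact mul_le_mul_left (by norm_num) _
    _ = 27 * (QS s m1 + QS s m2 + QS s m3 + QS s m4) := by ring

lemma nnorm4 (x1 x2 x3 x4 : ℂ) :
    ((‖x1 + x2 - x3 - x4‖₊ : ℝ≥0∞))
      ≤ (‖x1‖₊ : ℝ≥0∞) + (‖x2‖₊ : ℝ≥0∞) + (‖x3‖₊ : ℝ≥0∞) + (‖x4‖₊ : ℝ≥0∞) := by
  have h : ‖x1 + x2 - x3 - x4‖₊ ≤ ‖x1‖₊ + ‖x2‖₊ + ‖x3‖₊ + ‖x4‖₊ := by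
    calc ‖x1 + x2 - x3 - x4‖₊ ≤ ‖x1 + x2 - x3‖₊ + ‖x4‖₊ := nnnorm_sub_le _ _
      _ ≤ (‖x1 + x2‖₊ + ‖x3‖₊) + ‖x4‖₊ := add_le_add_left (nnnorm_sub_le _ _) _
      _ ≤ ((‖x1‖₊ + ‖x2‖₊) + ‖x3‖₊) + ‖x4‖₊ :=
          add_le_add_left (add_le_add_left (nnnorm_add_le _ _) _) _
  exact_mod_cast h

lemma ES_fst_le (s : ℝ) (hs : 0 ≤ s) (N : ℕ) (t : ℝ) (u v : ℤ → ℂ) :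
    ES s (vecB2Qfst N t u v) ≤ 108 * (CC s * ((N:ℝ≥0∞))⁻¹ ^ 2
      * ((ES s u + ES s v) * (ES s u + ES s v))) := by
  have hpt : ∀ k : ℤ, ((‖vecB2Qfst N t u v k‖₊ : ℝ≥0∞))
      ≤ (‖B2 t (Plow N u) (Qhigh N v) k‖₊ : ℝ≥0∞) + (‖B2 t (Qhigh N u) v k‖₊ : ℝ≥0∞)
        + (‖B2 t (Plow N u) (Qhigh N u) k‖₊ : ℝ≥0∞) + (‖B2 t (Qhigh N u) u k‖₊ : ℝ≥0∞) :=
    fun k => nnorm4 _ _ _ _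
  have h1 : ES s (vecB2Qfst N t u v)
      ≤ QS s (fun k => (‖B2 t (Plow N u) (Qhigh N v) k‖₊ : ℝ≥0∞)
        + (‖B2 t (Qhigh N u) v k‖₊ : ℝ≥0∞)
        + (‖B2 t (Plow N u) (Qhigh N u) k‖₊ : ℝ≥0∞)
        + (‖B2 t (Qhigh N u) u k‖₊ : ℝ≥0∞)) := QS_mono s hpt
  refine h1.trans ((QS_sum4 s _ _ _ _).trans ?_)
  have e : (27 : ℝ≥0∞) * 4 = 108 := by norm_num
  have hEU : ∀ x y : ℤ → ℂ, ES s x ≤ ES s u + ES s v → ES s y ≤ ES s u + ES s v →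
      ES s (B2 t (Plow N x) (Qhigh N y)) ≤ CC s * ((N:ℝ≥0∞))⁻¹ ^ 2
        * ((ES s u + ES s v) * (ES s u + ES s v)) := fun x y hx hy =>
    (piece_PQ s hs N t x y).trans (mul_le_mul_right (mul_le_mul' hx hy) _)
  have hEUf : ∀ x y : ℤ → ℂ, ES s x ≤ ES s u + ES s v → ES s y ≤ ES s u + ES s v →
      ES s (B2 t (Qhigh N x) y) ≤ CC s * ((N:ℝ≥0∞))⁻¹ ^ 2
        * ((ES s u + ES s v) * (ES s u + ES s v)) := fun x y hx hy =>
    (piece_QF s hs N t x y).trans (mul_le_mul_right (mul_le_mul' hx hy) _)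
  have b1 := hEU u v le_self_add le_add_self
  have b2 := hEUf u v le_self_add le_add_self
  have b3 := hEU u u le_self_add le_self_add
  have b4 := hEUf u u le_self_add le_self_add
  calc (27:ℝ≥0∞) * (ES s (B2 t (Plow N u) (Qhigh N v)) + ES s (B2 t (Qhigh N u) v)
        + ES s (B2 t (Plow N u) (Qhigh N u)) + ES s (B2 t (Qhigh N u) u))
      ≤ 27 * (CC s * ((N:ℝ≥0∞))⁻¹ ^ 2 * ((ES s u + ES s v) * (ES s u + ES s v))
        + CC s * ((N:ℝ≥0∞))⁻¹ ^ 2 * ((ES s u + ES s v) * (ES s u + ES s v))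
        + CC s * ((N:ℝ≥0∞))⁻¹ ^ 2 * ((ES s u + ES s v) * (ES s u + ES s v))
        + CC s * ((N:ℝ≥0∞))⁻¹ ^ 2 * ((ES s u + ES s v) * (ES s u + ES s v))) :=
        mul_le_mul_right (add_le_add (add_le_add (add_le_add b1 b2) b3) b4) _
    _ = 108 * (CC s * ((N:ℝ≥0∞))⁻¹ ^ 2 * ((ES s u + ES s v) * (ES s u + ES s v))) := by ring

lemma ES_snd_le (s : ℝ) (hs : 0 ≤ s) (N : ℕ) (t : ℝ) (u v : ℤ → ℂ) :
    ES s (vecB2Qsnd N t u v) ≤ 108 * (CC s * ((N:ℝ≥0∞))⁻¹ ^ 2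
      * ((ES s u + ES s v) * (ES s u + ES s v))) := by
  have hpt : ∀ k : ℤ, ((‖vecB2Qsnd N t u v k‖₊ : ℝ≥0∞))
      ≤ (‖B2 t (Plow N u) (Qhigh N v) k‖₊ : ℝ≥0∞) + (‖B2 t (Qhigh N u) v k‖₊ : ℝ≥0∞)
        + (‖B2 t (Plow N v) (Qhigh N v) k‖₊ : ℝ≥0∞) + (‖B2 t (Qhigh N v) v k‖₊ : ℝ≥0∞) :=
    fun k => nnorm4 _ _ _ _
  have h1 : ES s (vecB2Qsnd N t u v)
      ≤ QS s (fun k => (‖B2 t (Plow N u) (Qhigh N v) k‖₊ : ℝ≥0∞)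
        + (‖B2 t (Qhigh N u) v k‖₊ : ℝ≥0∞)
        + (‖B2 t (Plow N v) (Qhigh N v) k‖₊ : ℝ≥0∞)
        + (‖B2 t (Qhigh N v) v k‖₊ : ℝ≥0∞)) := QS_mono s hpt
  refine h1.trans ((QS_sum4 s _ _ _ _).trans ?_)
  have hEU : ∀ x y : ℤ → ℂ, ES s x ≤ ES s u + ES s v → ES s y ≤ ES s u + ES s v →
      ES s (B2 t (Plow N x) (Qhigh N y)) ≤ CC s * ((N:ℝ≥0∞))⁻¹ ^ 2
        * ((ES s u + ES s v) * (ES s u + ES s v)) := fun x y hx hy =>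
    (piece_PQ s hs N t x y).trans (mul_le_mul_right (mul_le_mul' hx hy) _)
  have hEUf : ∀ x y : ℤ → ℂ, ES s x ≤ ES s u + ES s v → ES s y ≤ ES s u + ES s v →
      ES s (B2 t (Qhigh N x) y) ≤ CC s * ((N:ℝ≥0∞))⁻¹ ^ 2
        * ((ES s u + ES s v) * (ES s u + ES s v)) := fun x y hx hy =>
    (piece_QF s hs N t x y).trans (mul_le_mul_right (mul_le_mul' hx hy) _)
  have b1 := hEU u v le_self_add le_add_self
  have b2 := hEUf u v le_self_add le_add_self
  have b3 := hEU v v le_add_self le_add_self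
  have b4 := hEUf v v le_add_self le_add_self
  calc (27:ℝ≥0∞) * (ES s (B2 t (Plow N u) (Qhigh N v)) + ES s (B2 t (Qhigh N u) v)
        + ES s (B2 t (Plow N v) (Qhigh N v)) + ES s (B2 t (Qhigh N v) v))
      ≤ 27 * (CC s * ((N:ℝ≥0∞))⁻¹ ^ 2 * ((ES s u + ES s v) * (ES s u + ES s v))
        + CC s * ((N:ℝ≥0∞))⁻¹ ^ 2 * ((ES s u + ES s v) * (ES s u + ES s v))
        + CC s * ((N:ℝ≥0∞))⁻¹ ^ 2 * ((ES s u + ES s v) * (ES s u + ES s v))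
        + CC s * ((N:ℝ≥0∞))⁻¹ ^ 2 * ((ES s u + ES s v) * (ES s u + ES s v))) :=
        mul_le_mul_right (add_le_add (add_le_add (add_le_add b1 b2) b3) b4) _
    _ = 108 * (CC s * ((N:ℝ≥0∞))⁻¹ ^ 2 * ((ES s u + ES s v) * (ES s u + ES s v))) := by ring

lemma Plow_sub (N : ℕ) (a b : ℤ → ℂ) :
    (fun i => Plow N a i - Plow N b i) = Plow N (fun i => a i - b i) := by
  funext i
  by_cases h : |i| ≤ (N:ℤ) <;> simp [Plow, h]

lemma Qhigh_sub (N : ℕ) (a b : ℤ → ℂ) :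
    (fun i => Qhigh N a i - Qhigh N b i) = Qhigh N (fun i => a i - b i) := by
  funext i
  by_cases h : |i| ≤ (N:ℤ) <;> simp [Qhigh, h]

lemma ES_Plow_le (s : ℝ) (N : ℕ) (u : ℤ → ℂ) : ES s (Plow N u) ≤ ES s u := by
  refine QS_mono s fun k => ?_
  show ((‖Plow N u k‖₊ : ℝ≥0∞)) ≤ _
  by_cases h : |k| ≤ (N:ℤ) <;> simp [Plow, h]

lemma ES_Qhigh_le (s : ℝ) (N : ℕ) (u : ℤ → ℂ) : ES s (Qhigh N u) ≤ ES s u := by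
  refine QS_mono s fun k => ?_
  show ((‖Qhigh N u k‖₊ : ℝ≥0∞)) ≤ _
  by_cases h : |k| ≤ (N:ℤ) <;> simp [Qhigh, h]

lemma nnorm_add2 (x y : ℂ) :
    ((‖x + y‖₊ : ℝ≥0∞)) ≤ (‖x‖₊ : ℝ≥0∞) + (‖y‖₊ : ℝ≥0∞) := by
  exact_mod_cast nnnorm_add_le x y

/-- Combined bound for a difference of `vec`-type combinations. -/
lemma ES_diff_combo (s : ℝ) (hs : 0 ≤ s) (N : ℕ) (t : ℝ)
    (X1 Y1 : ℤ → ℂ) (X2 Y2 : ℤ → ℂ) (X3 Y3 : ℤ → ℂ) (X4 Y4 : ℤ → ℂ) (F : ℤ → ℂ)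
    (hdecomp : ∀ k, F k = (X1 k + Y1 k) + (X2 k + Y2 k) - (X3 k + Y3 k) - (X4 k + Y4 k))
    (M : ℝ≥0∞)
    (h1 : ES s X1 ≤ M) (h2 : ES s Y1 ≤ M) (h3 : ES s X2 ≤ M) (h4 : ES s Y2 ≤ M)
    (h5 : ES s X3 ≤ M) (h6 : ES s Y3 ≤ M) (h7 : ES s X4 ≤ M) (h8 : ES s Y4 ≤ M) :
    ES s F ≤ 648 * M := by
  have hpt : ∀ k : ℤ, ((‖F k‖₊ : ℝ≥0∞))
      ≤ ((‖X1 k‖₊ : ℝ≥0∞) + (‖Y1 k‖₊ : ℝ≥0∞)) + ((‖X2 k‖₊ : ℝ≥0∞) + (‖Y2 k‖₊ : ℝ≥0∞))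
        + ((‖X3 k‖₊ : ℝ≥0∞) + (‖Y3 k‖₊ : ℝ≥0∞))
        + ((‖X4 k‖₊ : ℝ≥0∞) + (‖Y4 k‖₊ : ℝ≥0∞)) := by
    intro k
    rw [hdecomp k]
    refine (nnorm4 _ _ _ _).trans ?_
    exact add_le_add (add_le_add (add_le_add (nnorm_add2 _ _) (nnorm_add2 _ _))
      (nnorm_add2 _ _)) (nnorm_add2 _ _)
  have hQ1 : ES s F ≤ QS s (fun k =>
      ((‖X1 k‖₊ : ℝ≥0∞) + (‖Y1 k‖₊ : ℝ≥0∞)) + ((‖X2 k‖₊ : ℝ≥0∞) + (‖Y2 k‖₊ : ℝ≥0∞))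
        + ((‖X3 k‖₊ : ℝ≥0∞) + (‖Y3 k‖₊ : ℝ≥0∞))
        + ((‖X4 k‖₊ : ℝ≥0∞) + (‖Y4 k‖₊ : ℝ≥0∞))) := QS_mono s hpt
  refine hQ1.trans ((QS_sum4 s _ _ _ _).trans ?_)
  have hp : ∀ (X Y : ℤ → ℂ), ES s X ≤ M → ES s Y ≤ M →
      QS s (fun k => (‖X k‖₊ : ℝ≥0∞) + (‖Y k‖₊ : ℝ≥0∞)) ≤ 6 * M := by
    intro X Y hX hY
    refine (QS_add s (fun k => (‖X k‖₊ : ℝ≥0∞)) (fun k => (‖Y k‖₊ : ℝ≥0∞))).trans ?_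
    calc 3 * QS s (fun k => (‖X k‖₊ : ℝ≥0∞)) + 3 * QS s (fun k => (‖Y k‖₊ : ℝ≥0∞))
        ≤ 3 * M + 3 * M := add_le_add (mul_le_mul_right hX 3) (mul_le_mul_right hY 3)
      _ = 6 * M := by ring
  calc (27:ℝ≥0∞) * (QS s (fun k => (‖X1 k‖₊ : ℝ≥0∞) + (‖Y1 k‖₊ : ℝ≥0∞))
        + QS s (fun k => (‖X2 k‖₊ : ℝ≥0∞) + (‖Y2 k‖₊ : ℝ≥0∞))
        + QS s (fun k => (‖X3 k‖₊ : ℝ≥0∞) + (‖Y3 k‖₊ : ℝ≥0∞))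
        + QS s (fun k => (‖X4 k‖₊ : ℝ≥0∞) + (‖Y4 k‖₊ : ℝ≥0∞)))
      ≤ 27 * (6 * M + 6 * M + 6 * M + 6 * M) :=
        mul_le_mul_right (add_le_add (add_le_add (add_le_add (hp _ _ h1 h2) (hp _ _ h3 h4))
          (hp _ _ h5 h6)) (hp _ _ h7 h8)) _
    _ = 648 * M := by ring

lemma ES_dfst_le (s : ℝ) (hs : 0 ≤ s) (N : ℕ) (t : ℝ) (u v u' v' : ℤ → ℂ)
    (hu : ES s u ≠ ⊤) (hv : ES s v ≠ ⊤) (hu' : ES s u' ≠ ⊤) (hv' : ES s v' ≠ ⊤) :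
    ES s (fun k => vecB2Qfst N t u v k - vecB2Qfst N t u' v' k)
      ≤ 648 * (CC s * ((N:ℝ≥0∞))⁻¹ ^ 2
        * ((ES s (fun i => u i - u' i) + ES s (fun i => v i - v' i))
          * (ES s u + ES s v + ES s u' + ES s v'))) := by
  have h0 : ∀ w : ℤ → ℂ, ES s w ≠ ⊤ → ES 0 w ≠ ⊤ :=
    fun w hw => ne_top_of_le_ne_top hw (ES_zero_le s hs w)
  have hPf : ∀ w : ℤ → ℂ, ES s w ≠ ⊤ → ES 0 (Plow N w) ≠ ⊤ :=
    fun w hw => ne_top_of_le_ne_top (h0 w hw) (ES_Plow_le 0 N w)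
  have hQf : ∀ w : ℤ → ℂ, ES s w ≠ ⊤ → ES 0 (Qhigh N w) ≠ ⊤ :=
    fun w hw => ne_top_of_le_ne_top (h0 w hw) (ES_Qhigh_le 0 N w)
  have hdecomp : ∀ k : ℤ, vecB2Qfst N t u v k - vecB2Qfst N t u' v' k
      = (B2 t (Plow N (fun i => u i - u' i)) (Qhigh N v) k
          + B2 t (Plow N u') (Qhigh N (fun i => v i - v' i)) k)
        + (B2 t (Qhigh N (fun i => u i - u' i)) v k
          + B2 t (Qhigh N u') (fun i => v i - v' i) k)
        - (B2 t (Plow N (fun i => u i - u' i)) (Qhigh N u) k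
          + B2 t (Plow N u') (Qhigh N (fun i => u i - u' i)) k)
        - (B2 t (Qhigh N (fun i => u i - u' i)) u k
          + B2 t (Qhigh N u') (fun i => u i - u' i) k) := by
    intro k
    have e1 := B2_bilin t (Plow N u) (Plow N u') (Qhigh N v) (Qhigh N v')
      (hPf u hu) (hPf u' hu') (hQf v hv) (hQf v' hv') k
    rw [Plow_sub, Qhigh_sub] at e1
    have e2 := B2_bilin t (Qhigh N u) (Qhigh N u') v v'
      (hQf u hu) (hQf u' hu') (h0 v hv) (h0 v' hv') k
    rw [Qhigh_sub] at e2
    have e3 := B2_bilin t (Plow N u) (Plow N u') (Qhigh N u) (Qhigh N u')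
      (hPf u hu) (hPf u' hu') (hQf u hu) (hQf u' hu') k
    rw [Plow_sub, Qhigh_sub] at e3
    have e4 := B2_bilin t (Qhigh N u) (Qhigh N u') u u'
      (hQf u hu) (hQf u' hu') (h0 u hu) (h0 u' hu') k
    rw [Qhigh_sub] at e4
    show vecB2Qfst N t u v k - vecB2Qfst N t u' v' k = _
    rw [vecB2Qfst, vecB2Qfst]
    rw [← e1, ← e2, ← e3, ← e4]
    ring
  set ED := ES s (fun i => u i - u' i) + ES s (fun i => v i - v' i) with hED
  set EO := ES s u + ES s v + ES s u' + ES s v' with hEO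
  have hduED : ES s (fun i => u i - u' i) ≤ ED := by
    rw [hED]; exact le_add_right le_rfl
  have hdvED : ES s (fun i => v i - v' i) ≤ ED := by
    rw [hED]; exact le_add_left le_rfl
  have huEO : ES s u ≤ EO := by
    rw [hEO]; exact le_add_right (le_add_right (le_add_right le_rfl))
  have hvEO : ES s v ≤ EO := by
    rw [hEO]; exact le_add_right (le_add_right (le_add_left le_rfl))
  have hu'EO : ES s u' ≤ EO := by
    rw [hEO]; exact le_add_right (le_add_left le_rfl)
  have hv'EO : ES s v' ≤ EO := by
    rw [hEO]; exact le_add_left le_rfl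
  have hM : ∀ a b : ℝ≥0∞, a ≤ ED → b ≤ EO →
      CC s * ((N:ℝ≥0∞))⁻¹ ^ 2 * (a * b) ≤ CC s * ((N:ℝ≥0∞))⁻¹ ^ 2 * (ED * EO) :=
    fun a b ha hb => mul_le_mul_right (mul_le_mul' ha hb) _
  have hM' : ∀ a b : ℝ≥0∞, a ≤ EO → b ≤ ED →
      CC s * ((N:ℝ≥0∞))⁻¹ ^ 2 * (a * b) ≤ CC s * ((N:ℝ≥0∞))⁻¹ ^ 2 * (ED * EO) := by
    intro a b ha hb
    rw [show ED * EO = EO * ED from mul_comm _ _]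
    exact mul_le_mul_right (mul_le_mul' ha hb) _
  refine ES_diff_combo s hs N t _ _ _ _ _ _ _ _ _ hdecomp
    (CC s * ((N:ℝ≥0∞))⁻¹ ^ 2 * (ED * EO)) ?_ ?_ ?_ ?_ ?_ ?_ ?_ ?_
  · exact (piece_PQ s hs N t _ v).trans (hM _ _ hduED hvEO)
  · exact (piece_PQ s hs N t u' _).trans (hM' _ _ hu'EO hdvED)
  · exact (piece_QF s hs N t _ v).trans (hM _ _ hduED hvEO)
  · exact (piece_QF s hs N t u' _).trans (hM' _ _ hu'EO hdvED)
  · exact (piece_PQ s hs N t _ u).trans (hM _ _ hduED huEO)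
  · exact (piece_PQ s hs N t u' _).trans (hM' _ _ hu'EO hduED)
  · exact (piece_QF s hs N t _ u).trans (hM _ _ hduED huEO)
  · exact (piece_QF s hs N t u' _).trans (hM' _ _ hu'EO hduED)

lemma ES_dsnd_le (s : ℝ) (hs : 0 ≤ s) (N : ℕ) (t : ℝ) (u v u' v' : ℤ → ℂ)
    (hu : ES s u ≠ ⊤) (hv : ES s v ≠ ⊤) (hu' : ES s u' ≠ ⊤) (hv' : ES s v' ≠ ⊤) :
    ES s (fun k => vecB2Qsnd N t u v k - vecB2Qsnd N t u' v' k)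
      ≤ 648 * (CC s * ((N:ℝ≥0∞))⁻¹ ^ 2
        * ((ES s (fun i => u i - u' i) + ES s (fun i => v i - v' i))
          * (ES s u + ES s v + ES s u' + ES s v'))) := by
  have h0 : ∀ w : ℤ → ℂ, ES s w ≠ ⊤ → ES 0 w ≠ ⊤ :=
    fun w hw => ne_top_of_le_ne_top hw (ES_zero_le s hs w)
  have hPf : ∀ w : ℤ → ℂ, ES s w ≠ ⊤ → ES 0 (Plow N w) ≠ ⊤ :=
    fun w hw => ne_top_of_le_ne_top (h0 w hw) (ES_Plow_le 0 N w)
  have hQf : ∀ w : ℤ → ℂ, ES s w ≠ ⊤ → ES 0 (Qhigh N w) ≠ ⊤ :=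
    fun w hw => ne_top_of_le_ne_top (h0 w hw) (ES_Qhigh_le 0 N w)
  have hdecomp : ∀ k : ℤ, vecB2Qsnd N t u v k - vecB2Qsnd N t u' v' k
      = (B2 t (Plow N (fun i => u i - u' i)) (Qhigh N v) k
          + B2 t (Plow N u') (Qhigh N (fun i => v i - v' i)) k)
        + (B2 t (Qhigh N (fun i => u i - u' i)) v k
          + B2 t (Qhigh N u') (fun i => v i - v' i) k)
        - (B2 t (Plow N (fun i => v i - v' i)) (Qhigh N v) k
          + B2 t (Plow N v') (Qhigh N (fun i => v i - v' i)) k)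
        - (B2 t (Qhigh N (fun i => v i - v' i)) v k
          + B2 t (Qhigh N v') (fun i => v i - v' i) k) := by
    intro k
    have e1 := B2_bilin t (Plow N u) (Plow N u') (Qhigh N v) (Qhigh N v')
      (hPf u hu) (hPf u' hu') (hQf v hv) (hQf v' hv') k
    rw [Plow_sub, Qhigh_sub] at e1
    have e2 := B2_bilin t (Qhigh N u) (Qhigh N u') v v'
      (hQf u hu) (hQf u' hu') (h0 v hv) (h0 v' hv') k
    rw [Qhigh_sub] at e2
    have e3 := B2_bilin t (Plow N v) (Plow N v') (Qhigh N v) (Qhigh N v')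
      (hPf v hv) (hPf v' hv') (hQf v hv) (hQf v' hv') k
    rw [Plow_sub, Qhigh_sub] at e3
    have e4 := B2_bilin t (Qhigh N v) (Qhigh N v') v v'
      (hQf v hv) (hQf v' hv') (h0 v hv) (h0 v' hv') k
    rw [Qhigh_sub] at e4
    show vecB2Qsnd N t u v k - vecB2Qsnd N t u' v' k = _
    rw [vecB2Qsnd, vecB2Qsnd]
    rw [← e1, ← e2, ← e3, ← e4]
    ring
  set ED := ES s (fun i => u i - u' i) + ES s (fun i => v i - v' i) with hED
  set EO := ES s u + ES s v + ES s u' + ES s v' with hEO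
  have hduED : ES s (fun i => u i - u' i) ≤ ED := by
    rw [hED]; exact le_add_right le_rfl
  have hdvED : ES s (fun i => v i - v' i) ≤ ED := by
    rw [hED]; exact le_add_left le_rfl
  have huEO : ES s u ≤ EO := by
    rw [hEO]; exact le_add_right (le_add_right (le_add_right le_rfl))
  have hvEO : ES s v ≤ EO := by
    rw [hEO]; exact le_add_right (le_add_right (le_add_left le_rfl))
  have hu'EO : ES s u' ≤ EO := by
    rw [hEO]; exact le_add_right (le_add_left le_rfl)
  have hv'EO : ES s v' ≤ EO := by
    rw [hEO]; exact le_add_left le_rfl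
  have hM : ∀ a b : ℝ≥0∞, a ≤ ED → b ≤ EO →
      CC s * ((N:ℝ≥0∞))⁻¹ ^ 2 * (a * b) ≤ CC s * ((N:ℝ≥0∞))⁻¹ ^ 2 * (ED * EO) :=
    fun a b ha hb => mul_le_mul_right (mul_le_mul' ha hb) _
  have hM' : ∀ a b : ℝ≥0∞, a ≤ EO → b ≤ ED →
      CC s * ((N:ℝ≥0∞))⁻¹ ^ 2 * (a * b) ≤ CC s * ((N:ℝ≥0∞))⁻¹ ^ 2 * (ED * EO) := by
    intro a b ha hb
    rw [show ED * EO = EO * ED from mul_comm _ _]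
    exact mul_le_mul_right (mul_le_mul' ha hb) _
  refine ES_diff_combo s hs N t _ _ _ _ _ _ _ _ _ hdecomp
    (CC s * ((N:ℝ≥0∞))⁻¹ ^ 2 * (ED * EO)) ?_ ?_ ?_ ?_ ?_ ?_ ?_ ?_
  · exact (piece_PQ s hs N t _ v).trans (hM _ _ hduED hvEO)
  · exact (piece_PQ s hs N t u' _).trans (hM' _ _ hu'EO hdvED)
  · exact (piece_QF s hs N t _ v).trans (hM _ _ hduED hvEO)
  · exact (piece_QF s hs N t u' _).trans (hM' _ _ hu'EO hdvED)
  · exact (piece_PQ s hs N t _ v).trans (hM _ _ hdvED hvEO)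
  · exact (piece_PQ s hs N t v' _).trans (hM' _ _ hv'EO hdvED)
  · exact (piece_QF s hs N t _ v).trans (hM _ _ hdvED hvEO)
  · exact (piece_QF s hs N t v' _).trans (hM' _ _ hv'EO hdvED)

end B2Qaux

open B2Qaux

/-- Squeezing property of the high-mode bilinear vector
operator `𝐁₂^𝒬`. -/
theorem b2Q_squeezing (s : ℝ) (hs : 0 ≤ s) :
    ∃ C : ℝ, ∀ N : ℕ, 0 < N → ∀ t : ℝ, ∀ u v u' v' : ℤ → ℂ,
      memH s u → memH s v → memH s u' → memH s v' →
      (memH s (vecB2Qfst N t u v) ∧ memH s (vecB2Qsnd N t u v)) ∧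
      hnorm2 s (vecB2Qfst N t u v) (vecB2Qsnd N t u v) ≤
        C / (N : ℝ) * hnorm2 s u v ^ 2 ∧
      hnorm2 s (fun k => vecB2Qfst N t u v k - vecB2Qfst N t u' v' k)
          (fun k => vecB2Qsnd N t u v k - vecB2Qsnd N t u' v' k) ≤
        C / (N : ℝ) * hnorm2 s (fun k => u k - u' k) (fun k => v k - v' k) *
          (hnorm2 s u v + hnorm2 s u' v') := by
  classical
  have hCC0 : (0:ℝ) ≤ (CC s).toReal := ENNReal.toReal_nonneg
  refine ⟨Real.sqrt (1296 * (CC s).toReal), ?_⟩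
  intro N hN t u v u' v' hu hv hu' hv'
  set C : ℝ := Real.sqrt (1296 * (CC s).toReal) with hCdef
  have hC0 : 0 ≤ C := Real.sqrt_nonneg _
  have hCsq : C ^ 2 = 1296 * (CC s).toReal := Real.sq_sqrt (by positivity)
  have hCCne := CC_ne_top s hs
  have hNne : ((N:ℝ≥0∞)) ≠ 0 := by
    exact_mod_cast Nat.cast_ne_zero.mpr hN.ne'
  have hNinv : ((N:ℝ≥0∞))⁻¹ ≠ ⊤ := ENNReal.inv_ne_top.mpr hNne
  have hNinv2 : ((N:ℝ≥0∞))⁻¹ ^ 2 ≠ ⊤ := ENNReal.pow_ne_top hNinv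
  have hNpos : (0:ℝ) < (N:ℝ) := by exact_mod_cast hN
  have hEu : ES s u ≠ ⊤ := (memH_iff s u).mp hu
  have hEv : ES s v ≠ ⊤ := (memH_iff s v).mp hv
  have hEu' : ES s u' ≠ ⊤ := (memH_iff s u').mp hu'
  have hEv' : ES s v' ≠ ⊤ := (memH_iff s v').mp hv'
  have hEU : ES s u + ES s v ≠ ⊤ := ENNReal.add_ne_top.mpr ⟨hEu, hEv⟩
  have hEU' : ES s u' + ES s v' ≠ ⊤ := ENNReal.add_ne_top.mpr ⟨hEu', hEv'⟩
  -- part 1 : membership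
  have bf := ES_fst_le s hs N t u v
  have bsnd := ES_snd_le s hs N t u v
  have hRHS1ne : (108:ℝ≥0∞) * (CC s * ((N:ℝ≥0∞))⁻¹ ^ 2
      * ((ES s u + ES s v) * (ES s u + ES s v))) ≠ ⊤ := by
    refine ENNReal.mul_ne_top (by norm_num) ?_
    exact ENNReal.mul_ne_top (ENNReal.mul_ne_top hCCne hNinv2) (ENNReal.mul_ne_top hEU hEU)
  have hfstne : ES s (vecB2Qfst N t u v) ≠ ⊤ := ne_top_of_le_ne_top hRHS1ne bf
  have hsndne : ES s (vecB2Qsnd N t u v) ≠ ⊤ := ne_top_of_le_ne_top hRHS1ne bsnd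
  have htoR : ∀ X : ℝ≥0∞, ∀ c : ℝ≥0∞, ∀ cr : ℝ, c.toReal = cr →
      (c * (CC s * ((N:ℝ≥0∞))⁻¹ ^ 2 * X)).toReal
        = cr * ((CC s).toReal * ((N:ℝ)⁻¹) ^ 2 * X.toReal) := by
    intro X c cr hcr
    rw [ENNReal.toReal_mul, ENNReal.toReal_mul, ENNReal.toReal_mul, ENNReal.toReal_pow,
      ENNReal.toReal_inv, hcr]
    norm_num
  refine ⟨⟨(memH_iff _ _).mpr hfstne, (memH_iff _ _).mpr hsndne⟩, ?_, ?_⟩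
  · -- second statement
    have huv2 : hnorm2 s u v ^ 2 = (ES s u + ES s v).toReal := by
      rw [hnorm2, Real.sq_sqrt (by positivity), ENNReal.toReal_add hEu hEv,
        hnorm_sq, hnorm_sq]
    have hsum : ES s (vecB2Qfst N t u v) + ES s (vecB2Qsnd N t u v)
        ≤ 216 * (CC s * ((N:ℝ≥0∞))⁻¹ ^ 2 * ((ES s u + ES s v) * (ES s u + ES s v))) := by
      refine le_trans (add_le_add bf bsnd) (le_of_eq ?_)
      ring
    have hRHS2ne : (216:ℝ≥0∞) * (CC s * ((N:ℝ≥0∞))⁻¹ ^ 2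
        * ((ES s u + ES s v) * (ES s u + ES s v))) ≠ ⊤ := by
      refine ENNReal.mul_ne_top (by norm_num) ?_
      exact ENNReal.mul_ne_top (ENNReal.mul_ne_top hCCne hNinv2) (ENNReal.mul_ne_top hEU hEU)
    have hXle : hnorm s (vecB2Qfst N t u v) ^ 2 + hnorm s (vecB2Qsnd N t u v) ^ 2
        ≤ (C / (N:ℝ) * hnorm2 s u v ^ 2) ^ 2 := by
      rw [hnorm_sq, hnorm_sq, ← ENNReal.toReal_add hfstne hsndne]
      refine le_trans (ENNReal.toReal_mono hRHS2ne hsum) ?_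
      rw [htoR _ 216 216 (by norm_num), ENNReal.toReal_mul, huv2]
      set EUt := (ES s u + ES s v).toReal with hEUt
      have hEUt0 : 0 ≤ EUt := ENNReal.toReal_nonneg
      have hrhs : (C / (N:ℝ) * EUt) ^ 2 = 1296 * ((CC s).toReal * ((N:ℝ)⁻¹) ^ 2 * (EUt * EUt)) := by
        have he : (C / (N:ℝ) * EUt) ^ 2 = C ^ 2 * ((N:ℝ)⁻¹) ^ 2 * (EUt * EUt) := by ring
        rw [he, hCsq]; ring
      rw [hrhs]
      have hfac : 0 ≤ (CC s).toReal * ((N:ℝ)⁻¹) ^ 2 * (EUt * EUt) := by positivity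
      nlinarith [hfac]
    have hRHSnn : 0 ≤ C / (N:ℝ) * hnorm2 s u v ^ 2 := by positivity
    calc hnorm2 s (vecB2Qfst N t u v) (vecB2Qsnd N t u v)
        = Real.sqrt (hnorm s (vecB2Qfst N t u v) ^ 2 + hnorm s (vecB2Qsnd N t u v) ^ 2) := rfl
      _ ≤ Real.sqrt ((C / (N:ℝ) * hnorm2 s u v ^ 2) ^ 2) := Real.sqrt_le_sqrt hXle
      _ = C / (N:ℝ) * hnorm2 s u v ^ 2 := Real.sqrt_sq hRHSnn
  · -- third statement
    have hEd : ES s (fun k => u k - u' k) ≠ ⊤ := by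
      refine ne_top_of_le_ne_top ?_ (ES_sub_le s u u')
      exact ENNReal.add_ne_top.mpr ⟨ENNReal.mul_ne_top (by norm_num) hEu,
        ENNReal.mul_ne_top (by norm_num) hEu'⟩
    have hEdv : ES s (fun k => v k - v' k) ≠ ⊤ := by
      refine ne_top_of_le_ne_top ?_ (ES_sub_le s v v')
      exact ENNReal.add_ne_top.mpr ⟨ENNReal.mul_ne_top (by norm_num) hEv,
        ENNReal.mul_ne_top (by norm_num) hEv'⟩
    have hED : ES s (fun k => u k - u' k) + ES s (fun k => v k - v' k) ≠ ⊤ :=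
      ENNReal.add_ne_top.mpr ⟨hEd, hEdv⟩
    have hEO : ES s u + ES s v + ES s u' + ES s v' ≠ ⊤ := by
      refine ENNReal.add_ne_top.mpr ⟨ENNReal.add_ne_top.mpr ⟨hEU, hEu'⟩, hEv'⟩
    have bdf := ES_dfst_le s hs N t u v u' v' hEu hEv hEu' hEv'
    have bds := ES_dsnd_le s hs N t u v u' v' hEu hEv hEu' hEv'
    have hRHS3ne : (1296:ℝ≥0∞) * (CC s * ((N:ℝ≥0∞))⁻¹ ^ 2
        * ((ES s (fun i => u i - u' i) + ES s (fun i => v i - v' i))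
          * (ES s u + ES s v + ES s u' + ES s v'))) ≠ ⊤ := by
      refine ENNReal.mul_ne_top (by norm_num) ?_
      exact ENNReal.mul_ne_top (ENNReal.mul_ne_top hCCne hNinv2) (ENNReal.mul_ne_top hED hEO)
    have hRHS648ne : (648:ℝ≥0∞) * (CC s * ((N:ℝ≥0∞))⁻¹ ^ 2
        * ((ES s (fun i => u i - u' i) + ES s (fun i => v i - v' i))
          * (ES s u + ES s v + ES s u' + ES s v'))) ≠ ⊤ := by
      refine ENNReal.mul_ne_top (by norm_num) ?_
      exact ENNReal.mul_ne_top (ENNReal.mul_ne_top hCCne hNinv2) (ENNReal.mul_ne_top hED hEO)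
    have hdfne : ES s (fun k => vecB2Qfst N t u v k - vecB2Qfst N t u' v' k) ≠ ⊤ :=
      ne_top_of_le_ne_top hRHS648ne bdf
    have hdsne : ES s (fun k => vecB2Qsnd N t u v k - vecB2Qsnd N t u' v' k) ≠ ⊤ :=
      ne_top_of_le_ne_top hRHS648ne bds
    have hsum3 : ES s (fun k => vecB2Qfst N t u v k - vecB2Qfst N t u' v' k)
        + ES s (fun k => vecB2Qsnd N t u v k - vecB2Qsnd N t u' v' k)
        ≤ 1296 * (CC s * ((N:ℝ≥0∞))⁻¹ ^ 2
          * ((ES s (fun i => u i - u' i) + ES s (fun i => v i - v' i))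
            * (ES s u + ES s v + ES s u' + ES s v'))) := by
      refine le_trans (add_le_add bdf bds) (le_of_eq ?_)
      ring
    set EDt := (ES s (fun i => u i - u' i) + ES s (fun i => v i - v' i)).toReal with hEDt
    set EOt := (ES s u + ES s v + ES s u' + ES s v').toReal with hEOt
    have hEDt0 : 0 ≤ EDt := ENNReal.toReal_nonneg
    have hEOt0 : 0 ≤ EOt := ENNReal.toReal_nonneg
    have hd2 : hnorm2 s (fun k => u k - u' k) (fun k => v k - v' k) = Real.sqrt EDt := by
      rw [hnorm2, hEDt, ENNReal.toReal_add hEd hEdv, hnorm_sq, hnorm_sq]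
    have huv : hnorm2 s u v = Real.sqrt ((ES s u + ES s v).toReal) := by
      rw [hnorm2, ENNReal.toReal_add hEu hEv, hnorm_sq, hnorm_sq]
    have huv' : hnorm2 s u' v' = Real.sqrt ((ES s u' + ES s v').toReal) := by
      rw [hnorm2, ENNReal.toReal_add hEu' hEv', hnorm_sq, hnorm_sq]
    have hEOsplit : EOt = (ES s u + ES s v).toReal + (ES s u' + ES s v').toReal := by
      rw [hEOt, show ES s u + ES s v + ES s u' + ES s v'
        = (ES s u + ES s v) + (ES s u' + ES s v') from by ring,
        ENNReal.toReal_add hEU hEU']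
    set R : ℝ := C / (N:ℝ) * hnorm2 s (fun k => u k - u' k) (fun k => v k - v' k) *
      (hnorm2 s u v + hnorm2 s u' v') with hR
    have hRnn : 0 ≤ R := by
      rw [hR, hd2, huv, huv']
      positivity
    have hXle : hnorm s (fun k => vecB2Qfst N t u v k - vecB2Qfst N t u' v' k) ^ 2
        + hnorm s (fun k => vecB2Qsnd N t u v k - vecB2Qsnd N t u' v' k) ^ 2 ≤ R ^ 2 := by
      rw [hnorm_sq, hnorm_sq, ← ENNReal.toReal_add hdfne hdsne]
      refine le_trans (ENNReal.toReal_mono hRHS3ne hsum3) ?_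
      rw [htoR _ 1296 1296 (by norm_num), ENNReal.toReal_mul, ← hEDt, ← hEOt]
      have hsqrtsq : (Real.sqrt ((ES s u + ES s v).toReal)
          + Real.sqrt ((ES s u' + ES s v').toReal)) ^ 2
          = (ES s u + ES s v).toReal + (ES s u' + ES s v').toReal
            + 2 * (Real.sqrt ((ES s u + ES s v).toReal)
              * Real.sqrt ((ES s u' + ES s v').toReal)) := by
        have h1 : Real.sqrt ((ES s u + ES s v).toReal) ^ 2 = (ES s u + ES s v).toReal :=
          Real.sq_sqrt ENNReal.toReal_nonneg
        have h2 : Real.sqrt ((ES s u' + ES s v').toReal) ^ 2 = (ES s u' + ES s v').toReal :=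
          Real.sq_sqrt ENNReal.toReal_nonneg
        nlinarith [h1, h2]
      have hEOle : EOt ≤ (Real.sqrt ((ES s u + ES s v).toReal)
          + Real.sqrt ((ES s u' + ES s v').toReal)) ^ 2 := by
        rw [hsqrtsq, hEOsplit]
        have := mul_nonneg (Real.sqrt_nonneg ((ES s u + ES s v).toReal))
          (Real.sqrt_nonneg ((ES s u' + ES s v').toReal))
        linarith
      have hRsq : R ^ 2 = 1296 * ((CC s).toReal * ((N:ℝ)⁻¹) ^ 2
          * (EDt * ((Real.sqrt ((ES s u + ES s v).toReal)
            + Real.sqrt ((ES s u' + ES s v').toReal)) ^ 2))) := by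
        rw [hR, hd2, huv, huv']
        have hexp : (C / (N:ℝ) * Real.sqrt EDt * (Real.sqrt ((ES s u + ES s v).toReal)
            + Real.sqrt ((ES s u' + ES s v').toReal))) ^ 2
            = C ^ 2 * ((N:ℝ)⁻¹) ^ 2 * (Real.sqrt EDt ^ 2
              * (Real.sqrt ((ES s u + ES s v).toReal)
                + Real.sqrt ((ES s u' + ES s v').toReal)) ^ 2) := by
          ring
        rw [hexp, Real.sq_sqrt hEDt0, hCsq]
        ring
      rw [hRsq]
      have hfac : (0:ℝ) ≤ (CC s).toReal * ((N:ℝ)⁻¹) ^ 2 * EDt := by positivity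
      calc 1296 * ((CC s).toReal * ((N:ℝ)⁻¹) ^ 2 * (EDt * EOt))
          = 1296 * (((CC s).toReal * ((N:ℝ)⁻¹) ^ 2 * EDt) * EOt) := by ring
        _ ≤ 1296 * (((CC s).toReal * ((N:ℝ)⁻¹) ^ 2 * EDt)
            * ((Real.sqrt ((ES s u + ES s v).toReal)
              + Real.sqrt ((ES s u' + ES s v').toReal)) ^ 2)) := by
            refine mul_le_mul_of_nonneg_left ?_ (by norm_num)
            exact mul_le_mul_of_nonneg_left hEOle hfac
        _ = 1296 * ((CC s).toReal * ((N:ℝ)⁻¹) ^ 2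
            * (EDt * ((Real.sqrt ((ES s u + ES s v).toReal)
              + Real.sqrt ((ES s u' + ES s v').toReal)) ^ 2))) := by ring
    calc hnorm2 s (fun k => vecB2Qfst N t u v k - vecB2Qfst N t u' v' k)
          (fun k => vecB2Qsnd N t u v k - vecB2Qsnd N t u' v' k)
        = Real.sqrt (hnorm s (fun k => vecB2Qfst N t u v k - vecB2Qfst N t u' v' k) ^ 2
          + hnorm s (fun k => vecB2Qsnd N t u v k - vecB2Qsnd N t u' v' k) ^ 2) := rfl
      _ ≤ Real.sqrt (R ^ 2) := Real.sqrt_le_sqrt hXle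
      _ = R := Real.sqrt_sq hRnn
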